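/- arXiv:2405.11849 — 10 statements merged into one kernel-verified Lean document; each statement's English description precedes it below -/
import Mathlib

section
/- Let ā=(a_0,...,a_{n+1}) be a jump sequence. For every j with 1 ≤ j ≤ n, the absolute-distance cost of ā is at least |a_j - j|. -/
open scoped Classical

/-- A jump sequence for a word of length `n`: `a 0 = 0`, `a (n+1) = n+1`, and
`a` restricted to `{1,…,n}` is a permutation of `{1,…,n}`. -/
def IsJumpSeq (n : ℕ) (a : ℕ → ℕ) : Prop :=
  a 0 = 0 ∧ a (n + 1) = n + 1 ∧ Set.BijOn a (Set.Icc 1 n) (Set.Icc 1 n)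

/-- The absolute-distance cost `⟦ā⟧ = Σ_{i=1}^{n+1} (|a_i - a_{i-1}| - 1)`. -/
def absCost (n : ℕ) (a : ℕ → ℕ) : ℕ :=
  ∑ i ∈ Finset.range (n + 1), (((a (i + 1) : ℤ) - (a i : ℤ)).natAbs - 1)

/-- The maximum-jump cost `max_{i=1}^{n+1} (|a_i - a_{i-1}| - 1)`. -/
def maxCost (n : ℕ) (a : ℕ → ℕ) : ℕ :=
  (Finset.range (n + 1)).sup (fun i => ((a (i + 1) : ℤ) - (a i : ℤ)).natAbs - 1)

/-- The word `w_ā = w_{a_1} ⋯ w_{a_n}` (1-based indexing into `w`). -/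
def applyJump {α : Type*} [Inhabited α] (a : ℕ → ℕ) (w : List α) : List α :=
  (List.range w.length).map (fun i => w.getD (a (i + 1) - 1) default)

/-- `i` is a turning index of the jump sequence `a`. -/
def IsTurn (a : ℕ → ℕ) (i : ℕ) : Prop :=
  (a i > a (i - 1) ∧ a i > a (i + 1)) ∨ (a i < a (i - 1) ∧ a i < a (i + 1))

/-- The number of turning indices of `a` (among `1,…,n`). -/
noncomputable def turnCount (n : ℕ) (a : ℕ → ℕ) : ℕ :=
  ((Finset.Icc 1 n).filter (fun i => IsTurn a i)).card

/-- Hamming distance between two (equal-length) words. -/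
noncomputable def hamming {α : Type*} [Inhabited α] (w w' : List α) : ℕ :=
  ((Finset.range w.length).filter (fun i => w.getD i default ≠ w'.getD i default)).card

/-- for every `1 ≤ j ≤ n`, `⟦ā⟧ ≥ |a_j - j|`. -/
theorem absCost_ge_displacement (n : ℕ) (a : ℕ → ℕ) (h : IsJumpSeq n a)
    (j : ℕ) (hj1 : 1 ≤ j) (hj2 : j ≤ n) :
    ((a j : ℤ) - (j : ℤ)).natAbs ≤ absCost n a := by
  obtain ⟨h0, hn, -⟩ := h
  set f : ℕ → ℤ := fun i => (a i : ℤ) with hf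
  have hf0 : f 0 = 0 := by simp [hf, h0]
  have hfn : f (n + 1) = (n : ℤ) + 1 := by simp [hf, hn]
  have term_ge : ∀ s : Finset ℕ,
      (∑ i ∈ s, (|f (i+1) - f i| - 1)) ≤ ((∑ i ∈ s, ((f (i+1) - f i).natAbs - 1) : ℕ) : ℤ) := by
    intro s
    rw [Nat.cast_sum]
    apply Finset.sum_le_sum
    intro i _
    have : |f (i+1) - f i| = ((f (i+1) - f i).natAbs : ℤ) := Int.abs_eq_natAbs _
    omega
  have subset_le : ∀ s : Finset ℕ, s ⊆ Finset.range (n+1) →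
      (∑ i ∈ s, ((f (i+1) - f i).natAbs - 1)) ≤ absCost n a := by
    intro s hs
    exact Finset.sum_le_sum_of_subset hs
  have h1 : f j - (j : ℤ) ≤ (absCost n a : ℤ) := by
    have hs : Finset.range j ⊆ Finset.range (n+1) := Finset.range_subset_range.2 (by omega)
    have hA : f j - f 0 ≤ ∑ i ∈ Finset.range j, |f (i+1) - f i| := by
      rw [← Finset.sum_range_sub f]
      exact le_trans (le_abs_self _) (Finset.abs_sum_le_sum_abs _ _)
    have hB : (∑ i ∈ Finset.range j, (|f (i+1) - f i| - 1)) ≤ (absCost n a : ℤ) :=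
      le_trans (term_ge _) (by exact_mod_cast subset_le _ hs)
    have hsum : ∑ i ∈ Finset.range j, (|f (i+1) - f i| - 1)
        = (∑ i ∈ Finset.range j, |f (i+1) - f i|) - j := by
      rw [Finset.sum_sub_distrib]; simp
    rw [hsum] at hB
    linarith [hA, hB, hf0.ge]
  have h2 : (j : ℤ) - f j ≤ (absCost n a : ℤ) := by
    have hs : Finset.Ico j (n+1) ⊆ Finset.range (n+1) := by
      intro x hx
      simp only [Finset.mem_Ico] at hx
      exact Finset.mem_range.2 hx.2
    have htel : ∑ i ∈ Finset.Ico j (n+1), (f (i+1) - f i) = f (n+1) - f j := by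
      rw [Finset.sum_Ico_eq_sub _ (by omega : j ≤ n + 1),
        Finset.sum_range_sub f, Finset.sum_range_sub f]
      ring
    have hA : f (n+1) - f j ≤ ∑ i ∈ Finset.Ico j (n+1), |f (i+1) - f i| := by
      rw [← htel]
      exact le_trans (le_abs_self _) (Finset.abs_sum_le_sum_abs _ _)
    have hB : (∑ i ∈ Finset.Ico j (n+1), (|f (i+1) - f i| - 1)) ≤ (absCost n a : ℤ) :=
      le_trans (term_ge _) (by exact_mod_cast subset_le _ hs)
    have hcard : (Finset.Ico j (n+1)).card = n + 1 - j := Nat.card_Ico _ _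
    have hsum : ∑ i ∈ Finset.Ico j (n+1), (|f (i+1) - f i| - 1)
        = (∑ i ∈ Finset.Ico j (n+1), |f (i+1) - f i|) - ((n:ℤ) + 1 - j) := by
      rw [Finset.sum_sub_distrib, Finset.sum_const, Nat.card_Ico, nsmul_eq_mul, mul_one]
      push_cast [Nat.cast_sub (by omega : j ≤ n + 1)]
      ring
    rw [hsum] at hB
    rw [hfn] at hA
    linarith
  rw [← Nat.cast_le (α := ℤ), Nat.cast_natAbs]
  push_cast
  rw [abs_le]
  constructor <;> [linarith [h2]; linarith [h1]]
end

section
/- Let ā be a jump sequence of length n with maximum-jump cost at most k. Then for every m with 1 ≤ m ≤ n, the number of indices i ∈ {0,...,n} such that a_i and a_{i+1} lie on different sides of the m-cut is at most 2k+1. -/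
open scoped Classical

/-- The number of indices `i ∈ {0,…,n}` at which `a` crosses the `m`-cut. -/
noncomputable def crossCount (n m : ℕ) (a : ℕ → ℕ) : ℕ :=
  ((Finset.range (n + 1)).filter
    (fun i => (a i ≤ m ∧ m < a (i + 1)) ∨ (a (i + 1) ≤ m ∧ m < a i))).card

/-- if the maximum-jump cost of `ā` is at most `k`, then `ā` crosses
every `m`-cut (`1 ≤ m ≤ n`) at most `2k+1` times. -/
theorem crossCount_le_of_maxCost_le (n k : ℕ) (a : ℕ → ℕ) (h : IsJumpSeq n a)
    (hmax : maxCost n a ≤ k) :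
    ∀ m, 1 ≤ m → m ≤ n → crossCount n m a ≤ 2 * k + 1 := by
  obtain ⟨h0, hn, hbij⟩ := h
  intro m hm1 hmn
  set U := (Finset.range (n+1)).filter (fun i => a i ≤ m ∧ m < a (i+1)) with hU
  set D := (Finset.range (n+1)).filter (fun i => a (i+1) ≤ m ∧ m < a i) with hD
  -- jump bound
  have hjump : ∀ i ∈ Finset.range (n+1), ((a (i+1) : ℤ) - (a i : ℤ)).natAbs ≤ k + 1 := by
    intro i hi
    have := Finset.le_sup (f := fun i => ((a (i + 1) : ℤ) - (a i : ℤ)).natAbs - 1) hi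
    have h2 : ((a (i+1) : ℤ) - (a i : ℤ)).natAbs - 1 ≤ k := le_trans this hmax
    omega
  -- crossCount splits
  have hsplit : crossCount n m a = U.card + D.card := by
    rw [crossCount, hU, hD, Finset.filter_or]
    apply Finset.card_union_of_disjoint
    rw [Finset.disjoint_filter]
    intro i _ h1 h2
    omega
  -- a injective on {0,...,n}
  have hinj : ∀ i ∈ Finset.range (n+1), ∀ j ∈ Finset.range (n+1), a i = a j → i = j := by
    intro i hi j hj hij
    simp only [Finset.mem_range] at hi hj
    rcases Nat.eq_zero_or_pos i with hi0 | hi0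
    · rcases Nat.eq_zero_or_pos j with hj0 | hj0
      · omega
      · exfalso
        have hjm : a j ∈ Set.Icc 1 n := hbij.mapsTo ⟨hj0, by omega⟩
        rw [hi0, h0] at hij
        simp [Set.mem_Icc] at hjm
        omega
    · rcases Nat.eq_zero_or_pos j with hj0 | hj0
      · exfalso
        have him : a i ∈ Set.Icc 1 n := hbij.mapsTo ⟨hi0, by omega⟩
        rw [hj0, h0] at hij
        simp [Set.mem_Icc] at him
        omega
      · exact hbij.injOn ⟨hi0, by omega⟩ ⟨hj0, by omega⟩ hij
  -- card U ≤ k + 1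
  have hUcard : U.card ≤ k + 1 := by
    have hmap : ∀ i ∈ U, a i ∈ Finset.Icc (m - k) m := by
      intro i hi
      rw [hU, Finset.mem_filter] at hi
      obtain ⟨hir, him, hi1⟩ := hi
      have hj := hjump i hir
      have habs : ((a (i+1) : ℤ) - (a i : ℤ)).natAbs = a (i+1) - a i := by
        have : (a i : ℤ) ≤ a (i+1) := by exact_mod_cast le_of_lt (lt_of_le_of_lt him hi1)
        omega
      rw [Finset.mem_Icc]
      omega
    have hcard := Finset.card_le_card_of_injOn a hmap
      (fun i hi j hj hij => hinj i (Finset.filter_subset _ _ hi) j (Finset.filter_subset _ _ hj) hij)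
    have : (Finset.Icc (m - k) m).card = m + 1 - (m - k) := Nat.card_Icc _ _
    omega
  -- telescoping: card U = card D + 1
  have htel : U.card = D.card + 1 := by
    set f : ℕ → ℤ := fun i => if a i ≤ m then 1 else 0 with hf
    have h1 : ∑ i ∈ Finset.range (n+1), (f i - f (i+1)) = f 0 - f (n+1) :=
      Finset.sum_range_sub' f (n+1)
    have hf0 : f 0 = 1 := by simp [hf, h0]
    have hfn : f (n+1) = 0 := by simp [hf, hn]; omega
    have h2 : ∀ i, f i - f (i+1) =
        (if a i ≤ m ∧ m < a (i+1) then (1:ℤ) else 0)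
        - (if a (i+1) ≤ m ∧ m < a i then (1:ℤ) else 0) := by
      intro i
      simp only [hf]
      split_ifs <;> omega
    have h3 : ((U.card : ℤ)) - D.card = 1 := by
      have := h1
      rw [hf0, hfn] at this
      calc (U.card : ℤ) - D.card
          = ∑ i ∈ Finset.range (n+1), (if a i ≤ m ∧ m < a (i+1) then (1:ℤ) else 0)
            - ∑ i ∈ Finset.range (n+1), (if a (i+1) ≤ m ∧ m < a i then (1:ℤ) else 0) := by
            rw [hU, hD]
            rw [Finset.sum_boole, Finset.sum_boole]
        _ = ∑ i ∈ Finset.range (n+1), (f i - f (i+1)) := by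
            rw [← Finset.sum_sub_distrib]
            exact Finset.sum_congr rfl (fun i _ => (h2 i).symm)
        _ = 1 := by rw [h1, hf0, hfn]; ring
    omega
  omega
end

section
/- The number of crossings of any m-cut by a jump sequence is odd. -/
open scoped Classical

/-- the number of crossings of any `m`-cut (`1 ≤ m ≤ n`) by a jump
sequence is odd. -/
theorem crossCount_odd (n m : ℕ) (a : ℕ → ℕ) (h : IsJumpSeq n a)
    (hm1 : 1 ≤ m) (hm2 : m ≤ n) :
    Odd (crossCount n m a) := by
  set g : ℕ → ZMod 2 := fun i => if a i ≤ m then 1 else 0 with hg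
  have key : ((crossCount n m a : ℕ) : ZMod 2) = 1 := by
    have hcount : (crossCount n m a : ZMod 2)
        = ∑ i ∈ Finset.range (n + 1),
            (if (a i ≤ m ∧ m < a (i + 1)) ∨ (a (i + 1) ≤ m ∧ m < a i)
             then (1 : ZMod 2) else 0) := by
      rw [crossCount, Finset.card_filter]
      push_cast
      rfl
    have hterm : ∀ i,
        (if (a i ≤ m ∧ m < a (i + 1)) ∨ (a (i + 1) ≤ m ∧ m < a i)
         then (1 : ZMod 2) else 0) = g (i + 1) - g i := by
      intro i
      simp only [hg]
      by_cases h1 : a i ≤ m <;> by_cases h2 : a (i + 1) ≤ m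
      · rw [if_neg (by omega), if_pos h2, if_pos h1]; ring
      · rw [if_pos (by omega), if_neg h2, if_pos h1]; decide
      · rw [if_pos (by omega), if_pos h2, if_neg h1]; decide
      · rw [if_neg (by omega), if_neg h2, if_neg h1]; ring
    rw [hcount]
    simp_rw [hterm]
    rw [Finset.sum_range_sub g]
    have h0 : a 0 = 0 := h.1
    have hn : a (n + 1) = n + 1 := h.2.1
    simp only [hg, h0, hn]
    rw [if_neg (by omega), if_pos (by omega)]
    decide
  rw [Nat.odd_iff]
  have := congrArg ZMod.val key
  rwa [ZMod.val_natCast, ZMod.val_one] at this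
end

section
/- Let w be a word of length n and ā a jump sequence with absolute-distance cost at most k such that w_ā is accepted. Then the number of indices i ∈ {1,...,n} with a_i ≠ i is at most (2k+1)(k+1). Consequently, the Hamming distance between w and w_ā is at most (2k+1)(k+1), so boundedness of the ABS semantics implies boundedness of the Hamming semantics. -/
open scoped Classical

section AuxProof

variable {n : ℕ} {a : ℕ → ℕ}

lemma jump_mem (hj : IsJumpSeq n a) {p : ℕ} (hp : p ≤ n + 1) : a p ≤ n + 1 := by
  obtain ⟨h0, hn1, hbij⟩ := hj
  rcases Nat.eq_zero_or_pos p with rfl | hp1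
  · omega
  · rcases eq_or_lt_of_le hp with rfl | hlt
    · omega
    · have hm : a p ∈ Set.Icc 1 n := hbij.mapsTo ⟨hp1, by omega⟩
      have := hm.2
      omega

lemma jump_cases (hj : IsJumpSeq n a) {r : ℕ} (hr : r ≤ n + 1) :
    (r = 0 ∧ a r = 0) ∨ (r = n + 1 ∧ a r = n + 1) ∨
      (1 ≤ r ∧ r ≤ n ∧ 1 ≤ a r ∧ a r ≤ n) := by
  obtain ⟨h0, hn1, hbij⟩ := hj
  rcases Nat.eq_zero_or_pos r with rfl | hr1
  · exact Or.inl ⟨rfl, h0⟩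
  rcases eq_or_lt_of_le hr with rfl | hlt
  · exact Or.inr (Or.inl ⟨rfl, hn1⟩)
  · have hm : a r ∈ Set.Icc 1 n := hbij.mapsTo ⟨hr1, by omega⟩
    exact Or.inr (Or.inr ⟨hr1, by omega, hm.1, hm.2⟩)

lemma jump_inj (hj : IsJumpSeq n a) {p q : ℕ} (hp : p ≤ n + 1) (hq : q ≤ n + 1)
    (h : a p = a q) : p = q := by
  rcases jump_cases hj hp with ⟨hp1, hp2⟩ | ⟨hp1, hp2⟩ | ⟨hp1, hp2, hp3, hp4⟩ <;>
    rcases jump_cases hj hq with ⟨hq1, hq2⟩ | ⟨hq1, hq2⟩ | ⟨hq1, hq2, hq3, hq4⟩ <;>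
      try omega
  exact hj.2.2.injOn ⟨hp1, hp2⟩ ⟨hq1, hq2⟩ h

lemma jump_surj (hj : IsJumpSeq n a) {v : ℕ} (hv : v ≤ n + 1) :
    ∃ p, p ≤ n + 1 ∧ a p = v := by
  obtain ⟨h0, hn1, hbij⟩ := hj
  rcases Nat.eq_zero_or_pos v with rfl | hv1
  · exact ⟨0, by omega, h0⟩
  rcases eq_or_lt_of_le hv with rfl | hvn
  · exact ⟨n + 1, le_refl _, hn1⟩
  · obtain ⟨p, hp, hap⟩ := hbij.surjOn (Set.mem_Icc.mpr ⟨hv1, by omega⟩)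
    exact ⟨p, by have := hp.2; omega, hap⟩

lemma mono_of_steps (a : ℕ → ℕ) (p : ℕ) :
    ∀ q, p ≤ q → (∀ j, p ≤ j → j < q → a j ≤ a (j + 1)) → a p ≤ a q := by
  intro q
  induction q with
  | zero =>
    intro hpq _
    have : p = 0 := by omega
    subst this; exact le_refl _
  | succ q ih =>
    intro hpq hstep
    rcases eq_or_lt_of_le hpq with rfl | h'
    · exact le_refl _
    · exact le_trans (ih (by omega) (fun j h1 h2 => hstep j h1 (by omega)))
        (hstep q (by omega) (by omega))

lemma exists_desc (a : ℕ → ℕ) {p q : ℕ} (hpq : p ≤ q) (h : a q < a p) :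
    ∃ j, p ≤ j ∧ j < q ∧ a (j + 1) < a j := by
  by_contra hcon
  push_neg at hcon
  exact absurd (mono_of_steps a p q hpq fun j h1 h2 => hcon j h1 h2) (by omega)

lemma nonfixed_card_le (n : ℕ) (a : ℕ → ℕ) (k : ℕ) (hj : IsJumpSeq n a)
    (hc : absCost n a ≤ k) :
    ((Finset.Icc 1 n).filter (fun i => a i ≠ i)).card ≤ k * k := by
  obtain ⟨h0, hn1, -⟩ := id hj
  set d : ℕ → ℤ := fun j => (a (j + 1) : ℤ) - a j with hd
  have hane : ∀ j, j ≤ n → a (j + 1) ≠ a j := by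
    intro j hjn h
    have := jump_inj hj (p := j + 1) (q := j) (by omega) (by omega) h
    omega
  have hne0 : ∀ j, j ≤ n → d j ≠ 0 := by
    intro j hjn
    simp only [hd, sub_ne_zero]
    exact_mod_cast hane j hjn
  have habs1 : ∀ j, j ≤ n → 1 ≤ |d j| := fun j hjn => Int.one_le_abs (hne0 j hjn)
  have hcast : ∀ j, j ≤ n → (((d j).natAbs - 1 : ℕ) : ℤ) = |d j| - 1 := by
    intro j hjn
    have h1 : 1 ≤ (d j).natAbs := Int.natAbs_pos.mpr (hne0 j hjn)
    rw [Nat.cast_sub h1]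
    simp [Int.natCast_natAbs]
  have hcostZ : ∑ j ∈ Finset.range (n + 1), (|d j| - 1) ≤ (k : ℤ) := by
    have h1 : ((absCost n a : ℕ) : ℤ) ≤ (k : ℤ) := by exact_mod_cast hc
    unfold absCost at h1
    rw [Nat.cast_sum] at h1
    refine le_trans (le_of_eq ?_) h1
    refine Finset.sum_congr rfl fun j hjm => ?_
    have hjn : j ≤ n := by
      have := Finset.mem_range.mp hjm; omega
    exact (hcast j hjn).symm
  have htelr : ∀ i, ∑ j ∈ Finset.range i, d j = (a i : ℤ) - a 0 := by
    intro i
    simpa only [hd] using Finset.sum_range_sub (fun t => (a t : ℤ)) i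
  have htel : ∑ j ∈ Finset.range (n + 1), d j = (n + 1 : ℤ) := by
    rw [htelr (n + 1), hn1, h0]
    push_cast; ring
  have hterm : ∀ j ∈ Finset.range (n + 1), (0 : ℤ) ≤ |d j| - 1 := by
    intro j hjm
    have hjn : j ≤ n := by have := Finset.mem_range.mp hjm; omega
    linarith [habs1 j hjn]
  have hpartial : ∀ s : Finset ℕ, s ⊆ Finset.range (n + 1) →
      ∑ j ∈ s, (d j - 1) ≤ (k : ℤ) := by
    intro s hs
    calc ∑ j ∈ s, (d j - 1) ≤ ∑ j ∈ s, (|d j| - 1) :=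
          Finset.sum_le_sum fun j _ => by linarith [le_abs_self (d j)]
      _ ≤ ∑ j ∈ Finset.range (n + 1), (|d j| - 1) :=
          Finset.sum_le_sum_of_subset_of_nonneg hs (fun j hj _ => hterm j hj)
      _ ≤ k := hcostZ
  have hdisp1 : ∀ i, i ≤ n + 1 → (a i : ℤ) - i ≤ k := by
    intro i hi
    have e2 : (a i : ℤ) - i = ∑ j ∈ Finset.range i, (d j - 1) := by
      rw [Finset.sum_sub_distrib, htelr i, h0]
      simp
    rw [e2]
    exact hpartial _ (by intro x hx; simp at hx ⊢; omega)
  have hdisp2 : ∀ i, i ≤ n + 1 → (i : ℤ) - a i ≤ k := by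
    intro i hi
    have e1 : ∑ j ∈ Finset.Ico i (n + 1), d j = (n + 1 : ℤ) - a i := by
      rw [Finset.sum_Ico_eq_sub _ hi, htel, htelr i, h0]
      push_cast; ring
    have e2 : (i : ℤ) - a i = ∑ j ∈ Finset.Ico i (n + 1), (d j - 1) := by
      rw [Finset.sum_sub_distrib, e1, Finset.sum_const, Nat.card_Ico]
      simp only [nsmul_eq_mul, mul_one]
      omega
    rw [e2]
    exact hpartial _ (by intro x hx; simp at hx ⊢; omega)
  set Bs := (Finset.range (n + 1)).filter (fun j => a (j + 1) < a j) with hBs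
  have hBcard : 2 * Bs.card ≤ k := by
    have h1 : ∑ j ∈ Finset.range (n + 1), (|d j| - d j) ≤ (k : ℤ) := by
      have hz : ∑ j ∈ Finset.range (n + 1), (d j - 1) = 0 := by
        rw [Finset.sum_sub_distrib, htel, Finset.sum_const, Finset.card_range]
        push_cast; ring
      have e : ∑ j ∈ Finset.range (n + 1), (|d j| - d j)
          = ∑ j ∈ Finset.range (n + 1), ((|d j| - 1) - (d j - 1)) :=
        Finset.sum_congr rfl (by intros; ring)
      rw [e, Finset.sum_sub_distrib, hz, sub_zero]
      exact hcostZ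
    have h2 : (2 * Bs.card : ℤ) ≤ ∑ j ∈ Finset.range (n + 1), (|d j| - d j) := by
      calc (2 * Bs.card : ℤ) = ∑ _j ∈ Bs, (2 : ℤ) := by
            rw [Finset.sum_const]; push_cast; ring
        _ ≤ ∑ j ∈ Bs, (|d j| - d j) := by
            refine Finset.sum_le_sum fun j hjB => ?_
            have hlt : a (j + 1) < a j := (Finset.mem_filter.mp hjB).2
            have hdj : d j ≤ -1 := by simp only [hd]; omega
            have habs : |d j| = -d j := abs_of_neg (by omega)
            omega
        _ ≤ ∑ j ∈ Finset.range (n + 1), (|d j| - d j) := by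
            refine Finset.sum_le_sum_of_subset_of_nonneg (Finset.filter_subset _ _)
              (fun j _ _ => by linarith [le_abs_self (d j)])
    have := h2.trans h1
    exact_mod_cast this
  -- pigeonhole: a nonfixed position has a later small value / earlier large value
  have hpigeon1 : ∀ i, 1 ≤ i → i ≤ n → i < a i →
      ∃ p, i < p ∧ p ≤ n + 1 ∧ a p ≤ i := by
    intro i h1 h2 hlt
    by_contra hcon
    push_neg at hcon
    set S := (Finset.Icc 0 (n + 1)).filter (fun p => a p ≤ i) with hS
    have hScard : S.card = i + 1 := by
      have : S.card = (Finset.Icc 0 i).card := by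
        apply Finset.card_bij (fun p _ => a p)
        · intro p hp
          simp only [hS, Finset.mem_filter, Finset.mem_Icc] at hp ⊢
          omega
        · intro p hp q hq hpq
          simp only [hS, Finset.mem_filter, Finset.mem_Icc] at hp hq
          exact jump_inj hj hp.1.2 hq.1.2 hpq
        · intro v hv
          simp only [Finset.mem_Icc] at hv
          obtain ⟨p, hp, hap⟩ := jump_surj hj (v := v) (by omega)
          refine ⟨p, ?_, hap⟩
          simp only [hS, Finset.mem_filter, Finset.mem_Icc]
          omega
      rw [this, Nat.card_Icc]
      omega
    have hsub : S ⊆ (Finset.Icc 0 i).erase i := by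
      intro p hp
      simp only [hS, Finset.mem_filter, Finset.mem_Icc] at hp
      have hpi : p ≤ i := by
        by_contra hpi'
        have := hcon p (by omega) hp.1.2
        omega
      have hpne : p ≠ i := by rintro rfl; omega
      simp only [Finset.mem_erase, Finset.mem_Icc]
      omega
    have hle := Finset.card_le_card hsub
    rw [Finset.card_erase_of_mem (by simp), Nat.card_Icc] at hle
    omega
  have hpigeon2 : ∀ i, 1 ≤ i → i ≤ n → a i < i →
      ∃ p, p < i ∧ i ≤ a p := by
    intro i h1 h2 hlt
    by_contra hcon
    push_neg at hcon
    set T := (Finset.Icc 0 (n + 1)).filter (fun p => i ≤ a p) with hT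
    have hTcard : T.card = n + 2 - i := by
      have : T.card = (Finset.Icc i (n + 1)).card := by
        apply Finset.card_bij (fun p _ => a p)
        · intro p hp
          simp only [hT, Finset.mem_filter, Finset.mem_Icc] at hp ⊢
          exact ⟨hp.2, jump_mem hj hp.1.2⟩
        · intro p hp q hq hpq
          simp only [hT, Finset.mem_filter, Finset.mem_Icc] at hp hq
          exact jump_inj hj hp.1.2 hq.1.2 hpq
        · intro v hv
          simp only [Finset.mem_Icc] at hv
          obtain ⟨p, hp, hap⟩ := jump_surj hj (v := v) (by omega)
          refine ⟨p, ?_, hap⟩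
          simp only [hT, Finset.mem_filter, Finset.mem_Icc]
          omega
      rw [this, Nat.card_Icc]
    have hsub : T ⊆ (Finset.Icc i (n + 1)).erase i := by
      intro p hp
      simp only [hT, Finset.mem_filter, Finset.mem_Icc] at hp
      have hpi : i ≤ p := by
        by_contra hpi'
        have := hcon p (by omega)
        omega
      have hpne : p ≠ i := by rintro rfl; omega
      simp only [Finset.mem_erase, Finset.mem_Icc]
      omega
    have hle := Finset.card_le_card hsub
    rw [Finset.card_erase_of_mem (Finset.mem_Icc.mpr ⟨le_refl _, by omega⟩),
      Nat.card_Icc] at hle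
    omega
  -- every nonfixed position is within distance k of a backward step
  have hNsub : (Finset.Icc 1 n).filter (fun i => a i ≠ i) ⊆
      Bs.biUnion (fun j => Finset.Icc (j + 1 - k) (j + k)) := by
    intro i hi
    simp only [Finset.mem_filter, Finset.mem_Icc] at hi
    obtain ⟨⟨h1i, hin⟩, hne⟩ := hi
    rcases Nat.lt_or_ge i (a i) with hlt | hge
    · obtain ⟨p, hip, hpn, hapi⟩ := hpigeon1 i h1i hin hlt
      have hpk : p ≤ i + k := by
        have := hdisp2 p hpn
        omega
      obtain ⟨j, hj1, hj2, hj3⟩ := exists_desc a (le_of_lt hip) (by omega)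
      refine Finset.mem_biUnion.mpr ⟨j, ?_, ?_⟩
      · simp only [hBs, Finset.mem_filter, Finset.mem_range]
        exact ⟨by omega, hj3⟩
      · simp only [Finset.mem_Icc]
        omega
    · have hlt : a i < i := by omega
      obtain ⟨p, hpi, hapi⟩ := hpigeon2 i h1i hin hlt
      have hpn : p ≤ n + 1 := by omega
      have hpk : i ≤ p + k := by
        have := hdisp1 p hpn
        omega
      obtain ⟨j, hj1, hj2, hj3⟩ := exists_desc a (le_of_lt hpi) (by omega)
      refine Finset.mem_biUnion.mpr ⟨j, ?_, ?_⟩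
      · simp only [hBs, Finset.mem_filter, Finset.mem_range]
        exact ⟨by omega, hj3⟩
      · simp only [Finset.mem_Icc]
        omega
  calc ((Finset.Icc 1 n).filter (fun i => a i ≠ i)).card
      ≤ (Bs.biUnion (fun j => Finset.Icc (j + 1 - k) (j + k))).card :=
        Finset.card_le_card hNsub
    _ ≤ ∑ j ∈ Bs, (Finset.Icc (j + 1 - k) (j + k)).card := Finset.card_biUnion_le
    _ ≤ ∑ _j ∈ Bs, 2 * k := Finset.sum_le_sum fun j _ => by rw [Nat.card_Icc]; omega
    _ = Bs.card * (2 * k) := by rw [Finset.sum_const, smul_eq_mul]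
    _ = (2 * Bs.card) * k := by ring
    _ ≤ k * k := Nat.mul_le_mul_right k hBcard

end AuxProof

/-- if `ā` has absolute-distance cost at most `k` and `w_ā` is accepted
(into `L`), then at most `(2k+1)(k+1)` positions satisfy `a_i ≠ i`, and hence
`d_H(w, w_ā) ≤ (2k+1)(k+1)`. -/
theorem nonfixed_le_of_absCost_le {α : Type*} [Inhabited α] (L : Language α)
    (w : List α) (k : ℕ) (a : ℕ → ℕ) (hj : IsJumpSeq w.length a)
    (hc : absCost w.length a ≤ k) (hacc : applyJump a w ∈ L) :
    ((Finset.Icc 1 w.length).filter (fun i => a i ≠ i)).card ≤ (2 * k + 1) * (k + 1) ∧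
    hamming w (applyJump a w) ≤ (2 * k + 1) * (k + 1) := by
  have hmain := nonfixed_card_le w.length a k hj hc
  have hkk : k * k ≤ (2 * k + 1) * (k + 1) := by nlinarith
  refine ⟨hmain.trans hkk, ?_⟩
  have happ : ∀ i, i < w.length →
      (applyJump a w).getD i default = w.getD (a (i + 1) - 1) default := by
    intro i hi
    unfold applyJump
    rw [List.getD_eq_getElem _ _ (by simpa using hi)]
    simp
  unfold hamming
  refine le_trans (le_trans
    (Finset.card_le_card_of_injOn (fun i => i + 1) ?_ ?_) hmain) hkk
  · intro i hi
    simp only [Finset.mem_coe, Finset.mem_filter, Finset.mem_range] at hi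
    obtain ⟨hi1, hi2⟩ := hi
    simp only [Finset.mem_coe, Finset.mem_filter, Finset.mem_Icc]
    refine ⟨⟨by omega, by omega⟩, ?_⟩
    intro hfix
    apply hi2
    rw [happ i hi1, hfix]
    simp
  · intro x _ y _ h
    dsimp only at h
    omega
end

section
/- Let w be a word and w' a permutation of w in a language L with Hamming distance d_H(w,w') ≤ k. Then there exists a jump sequence ā with w_ā = w' (so w_ā ∈ L) whose number of turning indices is at most 3k. Hence boundedness of the Hamming semantics implies boundedness of the reversal semantics. -/
open scoped Classical

lemma exists_bij_of_map_eq {α : Type*} (f g : ℕ → α) :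
    ∀ (t s : Finset ℕ), s.val.map f = t.val.map g →
      ∃ σ : ℕ → ℕ, Set.BijOn σ ↑t ↑s ∧ ∀ i ∈ t, f (σ i) = g i := by
  classical
  intro t
  induction t using Finset.induction_on with
  | empty =>
    intro s hs
    have hs0 : s = ∅ := by
      have := congrArg Multiset.card hs
      have h0 : s.val.card = 0 := by simpa using this
      exact Finset.card_eq_zero.mp h0
    subst hs0
    exact ⟨id, by simp, by simp⟩
  | @insert i t' hi ih =>
    intro s hs
    have hval : (insert i t').val = i ::ₘ t'.val := Finset.insert_val_of_notMem hi
    rw [hval, Multiset.map_cons] at hs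
    have hmem : g i ∈ s.val.map f := by rw [hs]; exact Multiset.mem_cons_self _ _
    obtain ⟨j, hjs, hfj⟩ := Multiset.mem_map.mp hmem
    have hjs' : j ∈ s := hjs
    have hcons : s.val = j ::ₘ (s.erase j).val := by
      rw [Finset.erase_val]
      exact (Multiset.cons_erase hjs).symm
    rw [hcons, Multiset.map_cons, hfj] at hs
    have hs' : (s.erase j).val.map f = t'.val.map g :=
      (Multiset.cons_inj_right _).mp hs
    obtain ⟨σ', ⟨hmaps, hinj, hsurj⟩, hσ'⟩ := ih (s.erase j) hs'
    refine ⟨fun x => if x = i then j else σ' x, ⟨?_, ?_, ?_⟩, ?_⟩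
    · intro x hx
      simp only [Finset.coe_insert, Set.mem_insert_iff, Finset.mem_coe] at hx
      by_cases hxi : x = i
      · simpa [hxi] using hjs'
      · have hx' : x ∈ t' := hx.resolve_left hxi
        have := hmaps (by simpa using hx')
        simp only [Finset.mem_coe] at this
        simp only [hxi, if_false, Finset.mem_coe]
        exact Finset.mem_of_mem_erase this
    · intro x hx y hy hxy
      simp only [Finset.coe_insert, Set.mem_insert_iff, Finset.mem_coe] at hx hy
      by_cases hxi : x = i <;> by_cases hyi : y = i
      · rw [hxi, hyi]
      · exfalso
        have hy' : y ∈ t' := hy.resolve_left hyi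
        have : σ' y ∈ s.erase j := hmaps (by simpa using hy')
        simp only [hxi, hyi, if_pos, if_neg, ite_true, ite_false] at hxy
        exact Finset.ne_of_mem_erase this hxy.symm
      · exfalso
        have hx' : x ∈ t' := hx.resolve_left hxi
        have : σ' x ∈ s.erase j := hmaps (by simpa using hx')
        simp only [hxi, hyi, ite_true, ite_false] at hxy
        exact Finset.ne_of_mem_erase this hxy
      · have hx' : x ∈ t' := hx.resolve_left hxi
        have hy' : y ∈ t' := hy.resolve_left hyi
        simp only [hxi, hyi, ite_false] at hxy
        exact hinj (by simpa using hx') (by simpa using hy') hxy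
    · intro y hy
      simp only [Finset.mem_coe] at hy
      by_cases hyj : y = j
      · exact ⟨i, by simp, by simp [hyj]⟩
      · have : y ∈ s.erase j := Finset.mem_erase.mpr ⟨hyj, hy⟩
        obtain ⟨x, hx, hxy⟩ := hsurj (Finset.mem_coe.mpr this)
        have hx' : x ∈ t' := by simpa using hx
        have hxi : x ≠ i := by rintro rfl; exact hi hx'
        exact ⟨x, by simp [hx'], by simpa [hxi] using hxy⟩
    · intro x hx
      by_cases hxi : x = i
      · simp [hxi, hfj]
      · have hx' : x ∈ t' := by
          rcases Finset.mem_insert.mp hx with h | h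
          · exact absurd h hxi
          · exact h
        simpa [hxi] using hσ' x hx'


lemma range_map_getD {α : Type*} [Inhabited α] (l : List α) :
    (List.range l.length).map (fun i => l.getD i default) = l := by
  apply List.ext_getElem
  · simp
  · intro i h1 h2
    simp only [List.getElem_map, List.getElem_range]
    rw [List.getD_eq_getElem]

lemma Icc_eq_map_range (n : ℕ) :
    Finset.Icc 1 n = (Finset.range n).map ⟨(· + 1), add_left_injective 1⟩ := by
  ext j
  simp only [Finset.mem_Icc, Finset.mem_map, Finset.mem_range, Function.Embedding.coeFn_mk]
  constructor
  · rintro ⟨h1, h2⟩; exact ⟨j - 1, by omega, by omega⟩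
  · rintro ⟨i, hi, rfl⟩; omega

lemma Icc_val_map {α : Type*} [Inhabited α] (l : List α) :
    (Finset.Icc 1 l.length).val.map (fun i => l.getD (i - 1) default) = (l : Multiset α) := by
  rw [Icc_eq_map_range, Finset.map_val, Multiset.map_map]
  have : ((fun i => l.getD (i - 1) default) ∘ (⟨(· + 1), add_left_injective 1⟩ : ℕ ↪ ℕ))
      = fun i => l.getD i default := by
    funext i; simp
  rw [this]
  have : (Finset.range l.length).val = (List.range l.length : Multiset ℕ) := by
    simp [Finset.range_val, Multiset.range]
  rw [this, Multiset.map_coe, range_map_getD]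

/-- if `w' ∈ L` is a permutation of `w` with `d_H(w,w') ≤ k`, then there
is a jump sequence `ā` with `w_ā = w'` and at most `3k` turning indices. -/
theorem rev_le_of_hamming_le {α : Type*} [Inhabited α] (L : Language α)
    (w w' : List α) (k : ℕ) (hperm : w'.Perm w) (hmem : w' ∈ L)
    (hd : hamming w w' ≤ k) :
    ∃ a : ℕ → ℕ, IsJumpSeq w.length a ∧ applyJump a w = w' ∧
      turnCount w.length a ≤ 3 * k := by
  have hlen : w'.length = w.length := hperm.length_eq
  set f : ℕ → α := fun i => w.getD (i - 1) default with hfdef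
  set g : ℕ → α := fun i => w'.getD (i - 1) default with hgdef
  set D0 : Finset ℕ :=
    (Finset.range w.length).filter
      (fun i => w.getD i default ≠ w'.getD i default) with hD0def
  set D1 : Finset ℕ := D0.image (· + 1) with hD1def
  have hD1mem : ∀ j, j ∈ D1 ↔
      (1 ≤ j ∧ j ≤ w.length ∧ w.getD (j - 1) default ≠ w'.getD (j - 1) default) := by
    intro j
    simp only [hD1def, Finset.mem_image, hD0def, Finset.mem_filter, Finset.mem_range]
    constructor
    · rintro ⟨i, ⟨hi, hne⟩, rfl⟩
      exact ⟨by omega, by omega, by simpa using hne⟩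
    · rintro ⟨h1, h2, hne⟩
      exact ⟨j - 1, ⟨by omega, hne⟩, by omega⟩
  have hD1sub : D1 ⊆ Finset.Icc 1 w.length := by
    intro j hj
    have := (hD1mem j).mp hj
    rw [Finset.mem_Icc]; exact ⟨this.1, this.2.1⟩
  have hD1card : D1.card ≤ k := le_trans Finset.card_image_le hd
  -- multiset equality over Icc
  have h1 : (Finset.Icc 1 w.length).val.map f = (w : Multiset α) := Icc_val_map w
  have h2 : (Finset.Icc 1 w.length).val.map g = (w' : Multiset α) := by
    rw [← hlen]; exact Icc_val_map w'
  have hww' : (w : Multiset α) = (w' : Multiset α) := (Multiset.coe_eq_coe.mpr hperm).symm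
  have hIcc : (Finset.Icc 1 w.length).val.map f = (Finset.Icc 1 w.length).val.map g := by
    rw [h1, h2, hww']
  have hfilter : (Finset.Icc 1 w.length).val.filter (fun j => j ∈ D1) = D1.val := by
    rw [← Finset.filter_val]
    congr 1
    rw [Finset.filter_mem_eq_inter, Finset.inter_eq_right.mpr hD1sub]
  have hnot : ((Finset.Icc 1 w.length).val.filter (fun j => ¬ j ∈ D1)).map f
      = ((Finset.Icc 1 w.length).val.filter (fun j => ¬ j ∈ D1)).map g := by
    apply Multiset.map_congr rfl
    intro j hj
    rw [Multiset.mem_filter] at hj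
    obtain ⟨hjIcc, hjD⟩ := hj
    rw [← Finset.mem_def, Finset.mem_Icc] at hjIcc
    by_contra hne
    exact hjD ((hD1mem j).mpr ⟨hjIcc.1, hjIcc.2, by simpa [hfdef, hgdef] using hne⟩)
  have hsum : ∀ h : ℕ → α,
      (D1.val.map h) + ((Finset.Icc 1 w.length).val.filter (fun j => ¬ j ∈ D1)).map h
        = (Finset.Icc 1 w.length).val.map h := by
    intro h
    rw [← hfilter, ← Multiset.map_add, Multiset.filter_add_not]
  have hmain : D1.val.map f = D1.val.map g := by
    have e1 := hsum f
    have e2 := hsum g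
    rw [hnot] at e1
    rw [hIcc, ← e2] at e1
    exact add_right_cancel e1
  obtain ⟨σ, hbij, hσ⟩ := exists_bij_of_map_eq f g D1 D1 hmain
  set a : ℕ → ℕ := fun x => if x ∈ D1 then σ x else x with hadef
  have haD : ∀ x ∈ D1, a x = σ x := fun x hx => by simp [hadef, hx]
  have haN : ∀ x, x ∉ D1 → a x = x := fun x hx => by simp [hadef, hx]
  have hσD : ∀ x ∈ D1, σ x ∈ D1 := fun x hx => hbij.mapsTo (Finset.mem_coe.mpr hx)
  refine ⟨a, ⟨?_, ?_, ?_⟩, ?_, ?_⟩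
  · exact haN 0 (fun h => by have := ((hD1mem 0).mp h).1; omega)
  · exact haN _ (fun h => by have := ((hD1mem _).mp h).2.1; omega)
  · rw [← Finset.coe_Icc]
    refine ⟨?_, ?_, ?_⟩
    · intro x hx
      by_cases hxD : x ∈ D1
      · rw [haD x hxD]
        exact Finset.mem_coe.mpr (hD1sub (hσD x hxD))
      · rw [haN x hxD]; exact hx
    · intro x hx y hy hxy
      by_cases hxD : x ∈ D1 <;> by_cases hyD : y ∈ D1
      · rw [haD x hxD, haD y hyD] at hxy
        exact hbij.injOn (Finset.mem_coe.mpr hxD) (Finset.mem_coe.mpr hyD) hxy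
      · exfalso
        rw [haD x hxD, haN y hyD] at hxy
        exact hyD (hxy ▸ hσD x hxD)
      · exfalso
        rw [haN x hxD, haD y hyD] at hxy
        exact hxD (hxy ▸ hσD y hyD)
      · rw [haN x hxD, haN y hyD] at hxy; exact hxy
    · intro y hy
      by_cases hyD : y ∈ D1
      · obtain ⟨x, hx, hxy⟩ := hbij.surjOn (Finset.mem_coe.mpr hyD)
        have hxD : x ∈ D1 := Finset.mem_coe.mp hx
        exact ⟨x, Finset.mem_coe.mpr (hD1sub hxD), by rw [haD x hxD]; exact hxy⟩
      · exact ⟨y, hy, haN y hyD⟩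
  · -- applyJump
    apply List.ext_getElem
    · simp [applyJump, hlen]
    · intro i hi1 hi2
      have hiw : i < w.length := by simpa [applyJump] using hi1
      have hiw' : i < w'.length := by omega
      simp only [applyJump, List.getElem_map, List.getElem_range]
      by_cases hD : (i + 1) ∈ D1
      · have := hσ (i + 1) hD
        rw [haD _ hD]
        have : w.getD (σ (i + 1) - 1) default = w'.getD i default := by
          simpa [hfdef, hgdef] using this
        rw [this, List.getD_eq_getElem]
      · rw [haN _ hD]
        have heq : w.getD i default = w'.getD i default := by
          by_contra hne
          exact hD ((hD1mem (i + 1)).mpr ⟨by omega, by omega, by simpa using hne⟩)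
        simp only [Nat.add_sub_cancel]
        rw [heq, List.getD_eq_getElem]
  · -- turn count
    have hsubT : (Finset.Icc 1 w.length).filter (fun i => IsTurn a i) ⊆
        D1 ∪ D1.image (· + 1) ∪ D1.image (· - 1) := by
      intro i hi
      rw [Finset.mem_filter, Finset.mem_Icc] at hi
      obtain ⟨⟨hi1, hi2⟩, hturn⟩ := hi
      by_contra hc
      simp only [Finset.mem_union, Finset.mem_image, not_or, not_exists, not_and] at hc
      obtain ⟨⟨hc1, hc2⟩, hc3⟩ := hc
      have hai : a i = i := haN i hc1
      have haim : a (i - 1) = i - 1 := by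
        apply haN
        intro h
        exact hc2 (i - 1) h (by omega)
      have haip : a (i + 1) = i + 1 := by
        apply haN
        intro h
        have h1 := ((hD1mem (i + 1)).mp h).1
        exact hc3 (i + 1) h (by omega)
      rw [IsTurn, hai, haim, haip] at hturn
      omega
    have c1 := Finset.card_le_card hsubT
    have c2 := Finset.card_union_le (D1 ∪ D1.image (· + 1)) (D1.image (· - 1))
    have c3 := Finset.card_union_le D1 (D1.image (· + 1))
    have c4 := Finset.card_image_le (s := D1) (f := (· + 1))
    have c5 := Finset.card_image_le (s := D1) (f := (· - 1))
    rw [turnCount]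
    omega
end

section
/- Let w and w' be words of equal length with w' a permutation of w. Then there exists a jump sequence ā with w_ā = w' such that for every index i, if w_{a_i} = w_i then a_i = i (i.e., one may assume the jump sequence has no unnecessary swaps of identical letters), and moreover d_H(w, w_ā) = d_H(w, w'). -/
open scoped Classical

theorem card_fiber_eq_count' {α : Type*} (l : List α) (c : α) :
    Fintype.card {i : Fin l.length // l.get i = c} = l.count c := by
  classical
  rw [Fintype.card_subtype, List.count_eq_countP, List.countP_eq_length_filter]
  have h1 : (Finset.filter (fun x => l.get x = c) Finset.univ).card
      = ((List.finRange l.length).filter (fun x => decide (l.get x = c))).length := by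
    rw [Fin.univ_def]; rfl
  have h2 : l.filter (fun x => x == c)
      = ((List.finRange l.length).filter ((fun x => x == c) ∘ l.get)).map l.get := by
    rw [← List.filter_map]
    congr 1
    exact (List.map_get_finRange l).symm
  rw [h1, h2, List.length_map]
  congr 1

theorem refine_equiv' {α : Type*} {n : ℕ} (f g : Fin n → α) :
    ∀ (N : ℕ) (e : Fin n ≃ Fin n),
      (Finset.univ.filter (fun i => g i = f i ∧ e i ≠ i)).card ≤ N →
      (∀ i, f (e i) = g i) →
      ∃ e' : Fin n ≃ Fin n, (∀ i, f (e' i) = g i) ∧ ∀ i, g i = f i → e' i = i := by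
  classical
  intro N
  induction N with
  | zero =>
    intro e hcard he
    refine ⟨e, he, ?_⟩
    intro i hi
    by_contra h
    have : i ∈ Finset.univ.filter (fun i => g i = f i ∧ e i ≠ i) := by
      simp [hi, h]
    have := Finset.card_pos.mpr ⟨i, this⟩
    omega
  | succ N ih =>
    intro e hcard he
    by_cases hB : ∀ i, g i = f i → e i = i
    · exact ⟨e, he, hB⟩
    · push_neg at hB
      obtain ⟨i, hgi, hei⟩ := hB
      set j := e.symm i with hj
      have hji : e j = i := e.apply_symm_apply i
      have hij : i ≠ j := by
        intro h
        rw [← h] at hji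
        exact hei hji
      set e' := (Equiv.swap i j).trans e with he'
      have he'i : e' i = i := by
        simp [he', Equiv.swap_apply_left, hji]
      have he'j : e' j = e i := by
        simp [he', Equiv.swap_apply_right]
      have he'k : ∀ k, k ≠ i → k ≠ j → e' k = e k := by
        intro k hk1 hk2
        simp [he', Equiv.swap_apply_of_ne_of_ne hk1 hk2]
      have hprop : ∀ k, f (e' k) = g k := by
        intro k
        rcases eq_or_ne k i with rfl | hki
        · rw [he'i]; exact hgi.symm
        · rcases eq_or_ne k j with rfl | hkj
          · have h1 := he j
            rw [hji] at h1
            rw [he'j, he i, hgi, h1]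
          · rw [he'k k hki hkj]; exact he k
      have hi_mem : i ∈ Finset.univ.filter (fun k => g k = f k ∧ e k ≠ k) := by
        simp [hgi, hei]
      have hsub : Finset.univ.filter (fun k => g k = f k ∧ e' k ≠ k) ⊆
          (Finset.univ.filter (fun k => g k = f k ∧ e k ≠ k)).erase i := by
        intro k hk
        simp only [Finset.mem_filter, Finset.mem_univ, true_and] at hk
        obtain ⟨hkg, hke'⟩ := hk
        have hki : k ≠ i := by
          intro h; rw [h] at hke'; exact hke' he'i
        rw [Finset.mem_erase]
        refine ⟨hki, ?_⟩
        simp only [Finset.mem_filter, Finset.mem_univ, true_and]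
        refine ⟨hkg, ?_⟩
        rcases eq_or_ne k j with rfl | hkj
        · rw [hji]; exact hki.symm
        · rw [← he'k k hki hkj]; exact hke'
      have hle := Finset.card_le_card hsub
      rw [Finset.card_erase_of_mem hi_mem] at hle
      exact ih e' (by omega) hprop


/-- if `w'` is a permutation of `w`, there is a jump sequence `ā` with
`w_ā = w'` which has no unnecessary swaps of identical letters: whenever
`w_{a_i} = w_i` we have `a_i = i`; moreover `d_H(w, w_ā) = d_H(w, w')`. -/
theorem exists_jumpSeq_no_useless_swaps {α : Type*} [Inhabited α] (w w' : List α)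
    (hperm : w'.Perm w) :
    ∃ a : ℕ → ℕ, IsJumpSeq w.length a ∧ applyJump a w = w' ∧
      (∀ i, 1 ≤ i → i ≤ w.length →
        w.getD (a i - 1) default = w.getD (i - 1) default → a i = i) ∧
      hamming w (applyJump a w) = hamming w w' := by
  classical
  set n := w.length with hn
  have hlen : w'.length = n := hperm.length_eq
  set f : Fin n → α := fun i => w.get i with hf
  set g : Fin n → α := fun i => w'.get (Fin.cast hlen.symm i) with hg
  have hcardfib : ∀ c : α, Fintype.card {i : Fin n // g i = c}
      = Fintype.card {i : Fin n // f i = c} := by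
    intro c
    have h1 : Fintype.card {i : Fin n // g i = c}
        = Fintype.card {i : Fin w'.length // w'.get i = c} := by
      apply Fintype.card_congr
      refine Equiv.subtypeEquiv (finCongr hlen.symm) (fun i => ?_)
      simp only [hg, finCongr, Equiv.coe_fn_mk]
    rw [h1, card_fiber_eq_count', card_fiber_eq_count', hperm.count_eq]
  have fibE : ∀ c : α, {i : Fin n // g i = c} ≃ {i : Fin n // f i = c} :=
    fun c => Fintype.equivOfCardEq (hcardfib c)
  set e0 : Fin n ≃ Fin n := Equiv.ofFiberEquiv fibE with he0
  have he0prop : ∀ i, f (e0 i) = g i := fun i => Equiv.ofFiberEquiv_map fibE i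
  obtain ⟨e, heprop, hefix⟩ := refine_equiv' f g
    (Finset.univ.filter (fun i => g i = f i ∧ e0 i ≠ i)).card e0 le_rfl he0prop
  set a : ℕ → ℕ := fun i =>
    if h : 1 ≤ i ∧ i ≤ n then ((e ⟨i - 1, by omega⟩ : Fin n) : ℕ) + 1 else i with ha
  have ha_pos : ∀ i (_ : 1 ≤ i) (h2 : i ≤ n), a i = ((e ⟨i - 1, by omega⟩ : Fin n) : ℕ) + 1 := by
    intro i h1 h2
    simp only [ha]
    rw [dif_pos ⟨h1, h2⟩]
  have happly : applyJump a w = w' := by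
    apply List.ext_get
    · simp [applyJump, hlen, hn]
    · intro i h1 h2
      simp only [applyJump, List.get_eq_getElem, List.getElem_map, List.getElem_range]
      have hi : i < n := by simpa [applyJump] using h1
      have hv : a (i + 1) = ((e ⟨i, hi⟩ : Fin n) : ℕ) + 1 := by
        rw [ha_pos (i + 1) (by omega) (by omega)]; rfl
      rw [hv]
      simp only [Nat.add_sub_cancel]
      have hlt : ((e ⟨i, hi⟩ : Fin n) : ℕ) < w.length := (e ⟨i, hi⟩).isLt
      rw [List.getD_eq_getElem _ _ hlt]
      have := heprop ⟨i, hi⟩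
      simp only [hf, hg, List.get_eq_getElem] at this
      rw [this]
      rfl
  refine ⟨a, ⟨?_, ?_, ?_, ?_, ?_⟩, happly, ?_, by rw [happly]⟩
  · simp only [ha]; rw [dif_neg (by omega)]
  · simp only [ha]; rw [dif_neg (by omega)]
  · -- MapsTo
    intro x hx
    obtain ⟨hx1, hx2⟩ := hx
    rw [ha_pos x hx1 hx2]
    exact ⟨by omega, by have := (e ⟨x - 1, by omega⟩).isLt; omega⟩
  · -- InjOn
    intro x hx y hy hxy
    obtain ⟨hx1, hx2⟩ := hx
    obtain ⟨hy1, hy2⟩ := hy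
    rw [ha_pos x hx1 hx2, ha_pos y hy1 hy2] at hxy
    have : e ⟨x - 1, by omega⟩ = e ⟨y - 1, by omega⟩ := by
      apply Fin.ext; omega
    have h3 := e.injective this
    have h4 : x - 1 = y - 1 := congrArg Fin.val h3
    omega
  · -- SurjOn
    intro y hy
    obtain ⟨hy1, hy2⟩ := hy
    have hylt : y - 1 < n := by omega
    refine ⟨((e.symm ⟨y - 1, hylt⟩ : Fin n) : ℕ) + 1,
      ⟨by omega, by have := (e.symm ⟨y - 1, hylt⟩).isLt; omega⟩, ?_⟩
    have hx1 : (1 : ℕ) ≤ ((e.symm ⟨y - 1, hylt⟩ : Fin n) : ℕ) + 1 := by omega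
    have hx2 : ((e.symm ⟨y - 1, hylt⟩ : Fin n) : ℕ) + 1 ≤ n := by
      have := (e.symm ⟨y - 1, hylt⟩).isLt; omega
    rw [ha_pos _ hx1 hx2]
    have : (⟨((e.symm ⟨y - 1, hylt⟩ : Fin n) : ℕ) + 1 - 1, by omega⟩ : Fin n)
        = e.symm ⟨y - 1, hylt⟩ := by
      apply Fin.ext; simp
    rw [this, e.apply_symm_apply]
    have hval : ((⟨y - 1, hylt⟩ : Fin n) : ℕ) = y - 1 := rfl
    omega
  · -- no useless swaps
    intro i h1 h2 hw
    rw [ha_pos i h1 h2] at hw ⊢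
    have hi1 : i - 1 < n := by omega
    have hlt : ((e ⟨i - 1, hi1⟩ : Fin n) : ℕ) < w.length := (e ⟨i - 1, hi1⟩).isLt
    simp only [Nat.add_sub_cancel] at hw
    rw [List.getD_eq_getElem _ _ hlt, List.getD_eq_getElem _ _ (by omega : i - 1 < w.length)] at hw
    have hgf : g ⟨i - 1, hi1⟩ = f ⟨i - 1, hi1⟩ := by
      rw [← heprop ⟨i - 1, hi1⟩]
      simp only [hf, List.get_eq_getElem]
      exact hw
    have := hefix ⟨i - 1, hi1⟩ hgf
    rw [this]
    have hval : ((⟨i - 1, hi1⟩ : Fin n) : ℕ) = i - 1 := rfl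
    omega
end

section
/- Let w' be a word over alphabet Σ of size s, arranged as sorted blocks σ_1^{m_1} σ_2^{m_2} ··· σ_s^{m_s}, and let ā be a jump sequence with maximum-jump cost at most k. Then the word w'_ā is a concatenation of at most (s-1)(2k+1)+1 maximal blocks of identical letters. -/
open scoped Classical

private lemma key_flatten {α : Type*} (r' : ℕ) (τ : Fin (r' + 1) → α) (c : Fin (r' + 1) → ℕ) :
    (List.ofFn (fun j => List.replicate (c j) (τ j))).flatten
      = (List.ofFn (fun j : Fin r' => List.replicate (c j.castSucc) (τ j.castSucc))).flatten
        ++ List.replicate (c (Fin.last r')) (τ (Fin.last r')) := by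
  rw [List.ofFn_succ' (fun j => List.replicate (c j) (τ j)), List.concat_eq_append,
    List.flatten_concat]

private lemma decomp {α : Type*} [Inhabited α] (f : ℕ → α) : ∀ n : ℕ,
    ∃ r' : ℕ, r' ≤ (∑ i ∈ Finset.range n, if f i = f (i + 1) then 0 else 1) ∧
      ∃ (τ : Fin (r' + 1) → α) (cnt : Fin (r' + 1) → ℕ),
        (List.range (n + 1)).map f
          = (List.ofFn (fun j => List.replicate (cnt j) (τ j))).flatten ∧
        τ (Fin.last r') = f n := by
  intro n
  induction n with
  | zero =>
    refine ⟨0, Nat.zero_le _, fun _ => f 0, fun _ => 1, ?_, rfl⟩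
    rw [key_flatten]
    simp [show List.range 1 = [0] from rfl]
  | succ n IH =>
    obtain ⟨r', hr', τ, cnt, heq, hlast⟩ := IH
    by_cases h : f n = f (n + 1)
    · refine ⟨r', le_trans hr' (by rw [Finset.sum_range_succ]; exact Nat.le_add_right _ _),
        τ, Function.update cnt (Fin.last r') (cnt (Fin.last r') + 1), ?_, by rw [hlast, h]⟩
      rw [List.range_succ, List.map_append, heq, key_flatten, key_flatten]
      have hpre : (fun j : Fin r' => List.replicate
            ((Function.update cnt (Fin.last r') (cnt (Fin.last r') + 1)) j.castSucc) (τ j.castSucc))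
          = fun j : Fin r' => List.replicate (cnt j.castSucc) (τ j.castSucc) := by
        funext j
        rw [Function.update_of_ne (Fin.castSucc_lt_last j).ne]
      rw [hpre, Function.update_self, List.replicate_succ', ← List.append_assoc]
      simp [hlast, h]
    · refine ⟨r' + 1, ?_, Fin.snoc τ (f (n + 1)), Fin.snoc cnt 1, ?_, Fin.snoc_last _ _⟩
      · rw [Finset.sum_range_succ, if_neg h]; omega
      · rw [List.range_succ, List.map_append, heq]
        conv_rhs => rw [key_flatten]
        simp only [Fin.snoc_castSucc, Fin.snoc_last]
        simp

private lemma W_length {α : Type*} (m' : ℕ → ℕ) (g : ℕ → α) : ∀ s : ℕ,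
    ((List.ofFn fun j : Fin s => List.replicate (m' j) (g j)).flatten).length
      = ∑ j ∈ Finset.range s, m' j := by
  intro s
  induction s with
  | zero => simp
  | succ s IH =>
    rw [List.ofFn_succ', List.concat_eq_append, List.flatten_concat, List.length_append,
      Finset.sum_range_succ]
    simp only [Fin.coe_castSucc, Fin.val_last, List.length_replicate]
    rw [IH]

private lemma W_getD {α : Type*} [Inhabited α] (m' : ℕ → ℕ) (g : ℕ → α) : ∀ s t p : ℕ,
    t < s → (∑ j ∈ Finset.range t, m' j) ≤ p → p < ∑ j ∈ Finset.range (t + 1), m' j →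
    ((List.ofFn fun j : Fin s => List.replicate (m' j) (g j)).flatten).getD p default = g t := by
  intro s
  induction s with
  | zero => intro t p ht; omega
  | succ s IH =>
    intro t p ht h1 h2
    rw [List.ofFn_succ', List.concat_eq_append, List.flatten_concat]
    simp only [Fin.coe_castSucc, Fin.val_last]
    by_cases hts : t < s
    · have hlt : p < ((List.ofFn fun i : Fin s => List.replicate (m' i) (g i)).flatten).length := by
        rw [W_length]
        exact lt_of_lt_of_le h2 (Finset.sum_le_sum_of_subset (Finset.range_subset_range.2 (by omega)))
      rw [List.getD_append _ _ _ _ hlt]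
      exact IH t p hts h1 h2
    · have hts' : t = s := by omega
      subst hts'
      have hlen : ((List.ofFn fun i : Fin t => List.replicate (m' i) (g i)).flatten).length
          = ∑ j ∈ Finset.range t, m' j := W_length m' g t
      rw [List.getD_append_right _ _ _ _ (by rw [hlen]; exact h1), hlen]
      have hm : p - (∑ j ∈ Finset.range t, m' j) < m' t := by
        rw [Finset.sum_range_succ] at h2; omega
      rw [List.getD_eq_getElem _ _ (by simpa using hm)]
      exact List.getElem_replicate _

private lemma exists_block (m' : ℕ → ℕ) : ∀ s p : ℕ, p < ∑ j ∈ Finset.range s, m' j →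
    ∃ t, t < s ∧ (∑ j ∈ Finset.range t, m' j) ≤ p ∧ p < ∑ j ∈ Finset.range (t + 1), m' j := by
  intro s
  induction s with
  | zero => intro p hp; simp at hp
  | succ s IH =>
    intro p hp
    by_cases h : p < ∑ j ∈ Finset.range s, m' j
    · obtain ⟨t, ht, h1, h2⟩ := IH p h
      exact ⟨t, by omega, h1, h2⟩
    · exact ⟨s, by omega, by omega, hp⟩

private lemma boundary_bound (n k b : ℕ) (a : ℕ → ℕ) (h0 : a 0 = 0) (hn1 : a (n + 1) = n + 1)
    (hinj : Set.InjOn a (Set.Icc 1 n)) (hmaps : Set.MapsTo a (Set.Icc 1 n) (Set.Icc 1 n))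
    (hmax : ∀ i ≤ n, ((a (i + 1) : ℤ) - a i).natAbs ≤ k + 1) :
    ((Finset.range (n - 1)).filter (fun i =>
      (a (i + 1) ≤ b ∧ b < a (i + 2)) ∨ (a (i + 2) ≤ b ∧ b < a (i + 1)))).card ≤ 2 * k + 1 := by
  classical
  rcases Finset.eq_empty_or_nonempty ((Finset.range (n - 1)).filter (fun i =>
      (a (i + 1) ≤ b ∧ b < a (i + 2)) ∨ (a (i + 2) ≤ b ∧ b < a (i + 1)))) with hC | ⟨i₀, hi₀⟩
  · rw [hC]; simp
  · obtain ⟨hi₀r, hi₀c⟩ := Finset.mem_filter.1 hi₀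
    have hi₀r' : i₀ < n - 1 := Finset.mem_range.1 hi₀r
    have hx := hmaps (show i₀ + 1 ∈ Set.Icc 1 n from Set.mem_Icc.2 ⟨by omega, by omega⟩)
    have hy := hmaps (show i₀ + 2 ∈ Set.Icc 1 n from Set.mem_Icc.2 ⟨by omega, by omega⟩)
    rw [Set.mem_Icc] at hx hy
    have hbn : b < n := by rcases hi₀c with ⟨h1, h2⟩ | ⟨h1, h2⟩ <;> omega
    have hinj' : ∀ i ≤ n, ∀ j ≤ n, a i = a j → i = j := by
      intro i hi j hj hij
      rcases Nat.eq_zero_or_pos i with hi0 | hi0 <;> rcases Nat.eq_zero_or_pos j with hj0 | hj0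
      · omega
      · exfalso
        subst hi0
        rw [h0] at hij
        have := hmaps (show j ∈ Set.Icc 1 n from Set.mem_Icc.2 ⟨hj0, hj⟩)
        rw [Set.mem_Icc] at this; omega
      · exfalso
        subst hj0
        rw [h0] at hij
        have := hmaps (show i ∈ Set.Icc 1 n from Set.mem_Icc.2 ⟨hi0, hi⟩)
        rw [Set.mem_Icc] at this; omega
      · exact hinj (Set.mem_Icc.2 ⟨hi0, hi⟩) (Set.mem_Icc.2 ⟨hj0, hj⟩) hij
    set U := (Finset.range (n + 1)).filter (fun j => a j ≤ b ∧ b < a (j + 1)) with hU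
    set V := (Finset.range (n + 1)).filter (fun j => a (j + 1) ≤ b ∧ b < a j) with hV
    have hVc : ∑ j ∈ Finset.range (n + 1), (if a (j + 1) ≤ b ∧ b < a j then (1 : ℤ) else 0)
        = (V.card : ℤ) := by
      rw [hV, Finset.card_filter, Nat.cast_sum]
      exact Finset.sum_congr rfl (fun j _ => by split_ifs <;> simp)
    have hUc : ∑ j ∈ Finset.range (n + 1), (if a j ≤ b ∧ b < a (j + 1) then (1 : ℤ) else 0)
        = (U.card : ℤ) := by
      rw [hU, Finset.card_filter, Nat.cast_sum]
      exact Finset.sum_congr rfl (fun j _ => by split_ifs <;> simp)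
    have hUV : (V.card : ℤ) - U.card = -1 := by
      have hterm : ∀ j ∈ Finset.range (n + 1),
          (if a (j + 1) ≤ b ∧ b < a j then (1 : ℤ) else 0)
              - (if a j ≤ b ∧ b < a (j + 1) then (1 : ℤ) else 0)
            = (if a (j + 1) ≤ b then (1 : ℤ) else 0) - (if a j ≤ b then (1 : ℤ) else 0) := by
        intro j _
        split_ifs <;> omega
      calc (V.card : ℤ) - U.card
          = ∑ j ∈ Finset.range (n + 1),
              ((if a (j + 1) ≤ b ∧ b < a j then (1 : ℤ) else 0)
                - (if a j ≤ b ∧ b < a (j + 1) then (1 : ℤ) else 0)) := by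
            rw [Finset.sum_sub_distrib, hVc, hUc]
        _ = ∑ j ∈ Finset.range (n + 1),
              ((if a (j + 1) ≤ b then (1 : ℤ) else 0) - (if a j ≤ b then (1 : ℤ) else 0)) :=
            Finset.sum_congr rfl hterm
        _ = (if a (n + 1) ≤ b then (1 : ℤ) else 0) - (if a 0 ≤ b then (1 : ℤ) else 0) :=
            Finset.sum_range_sub (fun j => if a j ≤ b then (1 : ℤ) else 0) (n + 1)
        _ = -1 := by
            rw [h0, hn1, if_neg (by omega), if_pos (Nat.zero_le b)]
            norm_num
    have hUk : U.card ≤ k + 1 := by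
      have hle : U.card ≤ (Finset.Icc (b - k) b).card := by
        apply Finset.card_le_card_of_injOn (fun j => a j)
        · intro j hj
          have hjm := Finset.mem_filter.1 hj
          have hjr : j < n + 1 := Finset.mem_range.1 hjm.1
          have hj1 : a j ≤ b := hjm.2.1
          have hj2 : b < a (j + 1) := hjm.2.2
          have hm := hmax j (by omega)
          have hd : (a (j + 1) : ℤ) - a j ≤ (k : ℤ) + 1 := by
            calc (a (j + 1) : ℤ) - a j ≤ (((a (j + 1) : ℤ) - a j).natAbs : ℤ) := Int.le_natAbs
              _ ≤ (k : ℤ) + 1 := by exact_mod_cast hm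
          simp only [Finset.coe_Icc, Set.mem_Icc]
          omega
        · intro x hx' y hy' hxy
          have hx'' := Finset.mem_range.1 (Finset.mem_filter.1 hx').1
          have hy'' := Finset.mem_range.1 (Finset.mem_filter.1 hy').1
          exact hinj' x (by omega) y (by omega) hxy
      rw [Nat.card_Icc] at hle
      omega
    have hCle : ((Finset.range (n - 1)).filter (fun i =>
        (a (i + 1) ≤ b ∧ b < a (i + 2)) ∨ (a (i + 2) ≤ b ∧ b < a (i + 1)))).card
          ≤ U.card + V.card := by
      calc ((Finset.range (n - 1)).filter (fun i =>
            (a (i + 1) ≤ b ∧ b < a (i + 2)) ∨ (a (i + 2) ≤ b ∧ b < a (i + 1)))).card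
          = (((Finset.range (n - 1)).filter (fun i =>
            (a (i + 1) ≤ b ∧ b < a (i + 2)) ∨ (a (i + 2) ≤ b ∧ b < a (i + 1)))).image
              (· + 1)).card :=
            (Finset.card_image_of_injective _ (add_left_injective 1)).symm
        _ ≤ (U ∪ V).card := by
            apply Finset.card_le_card
            intro x hx'
            obtain ⟨i, hi, rfl⟩ := Finset.mem_image.1 hx'
            obtain ⟨hir, hic⟩ := Finset.mem_filter.1 hi
            have hir' := Finset.mem_range.1 hir
            rcases hic with h' | h'
            · exact Finset.mem_union_left _ (Finset.mem_filter.2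
                ⟨Finset.mem_range.2 (by omega), h'⟩)
            · exact Finset.mem_union_right _ (Finset.mem_filter.2
                ⟨Finset.mem_range.2 (by omega), h'⟩)
        _ ≤ U.card + V.card := Finset.card_union_le _ _
    omega

/-- if `w'` consists of sorted blocks `σ_1^{m_1} ⋯ σ_s^{m_s}` (the `σ_j`
distinct) and `ā` has maximum-jump cost at most `k`, then `w'_ā` is a concatenation of
at most `(s-1)(2k+1)+1` constant blocks. -/
theorem blocks_of_maxCost_le {α : Type*} [Inhabited α] (s k : ℕ) (σ : Fin s → α)
    (hinj : Function.Injective σ) (m : Fin s → ℕ) (w' : List α)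
    (hw : w' = (List.ofFn (fun j => List.replicate (m j) (σ j))).flatten)
    (a : ℕ → ℕ) (hj : IsJumpSeq w'.length a) (hmax : maxCost w'.length a ≤ k) :
    ∃ r ≤ (s - 1) * (2 * k + 1) + 1, ∃ (τ : Fin r → α) (cnt : Fin r → ℕ),
      applyJump a w' = (List.ofFn (fun j => List.replicate (cnt j) (τ j))).flatten := by
  classical
  set n := w'.length with hnd
  set m' : ℕ → ℕ := fun j => if h : j < s then m ⟨j, h⟩ else 0 with hm'
  set g : ℕ → α := fun j => if h : j < s then σ ⟨j, h⟩ else default with hg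
  have hw2 : w' = (List.ofFn fun j : Fin s => List.replicate (m' j) (g j)).flatten := by
    have hfn : (fun j : Fin s => List.replicate (m j) (σ j))
        = fun j : Fin s => List.replicate (m' j) (g j) := by
      funext j
      simp [hm', hg, j.isLt]
    rw [hw, hfn]
  have hlen : n = ∑ j ∈ Finset.range s, m' j := by rw [hnd, hw2, W_length]
  set F : ℕ → α := fun i => w'.getD (a (i + 1) - 1) default with hF
  have hAJ : applyJump a w' = (List.range n).map F := rfl
  rcases Nat.eq_zero_or_pos n with hn0 | hn1
  · exact ⟨0, Nat.zero_le _, Fin.elim0, Fin.elim0, by rw [hAJ, hn0]; simp⟩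
  · obtain ⟨r', hr', τ, cnt, heq, -⟩ := decomp F (n - 1)
    have hn' : n - 1 + 1 = n := by omega
    rw [hn'] at heq
    refine ⟨r' + 1, ?_, τ, cnt, by rw [hAJ]; exact heq⟩
    have hmax' : ∀ i ≤ n, ((a (i + 1) : ℤ) - a i).natAbs ≤ k + 1 := by
      intro i hi
      have h1 : ((a (i + 1) : ℤ) - a i).natAbs - 1 ≤ k :=
        le_trans (Finset.le_sup (f := fun i => ((a (i + 1) : ℤ) - (a i : ℤ)).natAbs - 1)
          (Finset.mem_range.2 (by omega))) hmax
      omega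
    have hsum_card : (∑ i ∈ Finset.range (n - 1), if F i = F (i + 1) then 0 else 1)
        = ((Finset.range (n - 1)).filter (fun i => ¬F i = F (i + 1))).card := by
      rw [Finset.card_filter]
      exact Finset.sum_congr rfl (fun i _ => by by_cases h : F i = F (i + 1) <;> simp [h])
    have hmono : ∀ t t' : ℕ, t ≤ t' →
        (∑ j ∈ Finset.range t, m' j) ≤ ∑ j ∈ Finset.range t', m' j :=
      fun t t' h => Finset.sum_le_sum_of_subset (Finset.range_subset_range.2 h)
    have hsub : (Finset.range (n - 1)).filter (fun i => ¬F i = F (i + 1)) ⊆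
        (Finset.Icc 1 (s - 1)).biUnion (fun t => (Finset.range (n - 1)).filter (fun i =>
          (a (i + 1) ≤ ∑ j ∈ Finset.range t, m' j ∧ (∑ j ∈ Finset.range t, m' j) < a (i + 2)) ∨
          (a (i + 2) ≤ ∑ j ∈ Finset.range t, m' j ∧ (∑ j ∈ Finset.range t, m' j) < a (i + 1)))) := by
      intro i hi
      obtain ⟨hir, hFi⟩ := Finset.mem_filter.1 hi
      have hir' := Finset.mem_range.1 hir
      have hx := hj.2.2.mapsTo (show i + 1 ∈ Set.Icc 1 n from Set.mem_Icc.2 ⟨by omega, by omega⟩)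
      have hy := hj.2.2.mapsTo (show i + 2 ∈ Set.Icc 1 n from Set.mem_Icc.2 ⟨by omega, by omega⟩)
      rw [Set.mem_Icc] at hx hy
      obtain ⟨t, ht, ht1, ht2⟩ := exists_block m' s (a (i + 1) - 1) (by rw [← hlen]; omega)
      obtain ⟨t', ht', ht1', ht2'⟩ := exists_block m' s (a (i + 2) - 1) (by rw [← hlen]; omega)
      have hFi1 : F i = g t := by
        rw [hF]
        simp only []
        rw [hw2, W_getD m' g s t _ ht ht1 ht2]
      have hFi2 : F (i + 1) = g t' := by
        rw [hF]
        simp only []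
        rw [hw2, W_getD m' g s t' _ ht' ht1' ht2']
      have htt : t ≠ t' := by
        intro h
        exact hFi (by rw [hFi1, hFi2, h])
      rcases Nat.lt_or_ge t t' with hlt | hge
      · refine Finset.mem_biUnion.2 ⟨t', Finset.mem_Icc.2 ⟨by omega, by omega⟩,
          Finset.mem_filter.2 ⟨hir, Or.inl ⟨?_, by omega⟩⟩⟩
        have := hmono (t + 1) t' (by omega)
        omega
      · have hlt' : t' < t := by omega
        refine Finset.mem_biUnion.2 ⟨t, Finset.mem_Icc.2 ⟨by omega, by omega⟩,
          Finset.mem_filter.2 ⟨hir, Or.inr ⟨?_, by omega⟩⟩⟩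
        have := hmono (t' + 1) t (by omega)
        omega
    have hbound : ((Finset.range (n - 1)).filter (fun i => ¬F i = F (i + 1))).card
        ≤ (s - 1) * (2 * k + 1) := by
      calc ((Finset.range (n - 1)).filter (fun i => ¬F i = F (i + 1))).card
          ≤ ((Finset.Icc 1 (s - 1)).biUnion (fun t => (Finset.range (n - 1)).filter (fun i =>
              (a (i + 1) ≤ ∑ j ∈ Finset.range t, m' j ∧
                (∑ j ∈ Finset.range t, m' j) < a (i + 2)) ∨
              (a (i + 2) ≤ ∑ j ∈ Finset.range t, m' j ∧
                (∑ j ∈ Finset.range t, m' j) < a (i + 1))))).card :=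
            Finset.card_le_card hsub
        _ ≤ ∑ t ∈ Finset.Icc 1 (s - 1), ((Finset.range (n - 1)).filter (fun i =>
              (a (i + 1) ≤ ∑ j ∈ Finset.range t, m' j ∧
                (∑ j ∈ Finset.range t, m' j) < a (i + 2)) ∨
              (a (i + 2) ≤ ∑ j ∈ Finset.range t, m' j ∧
                (∑ j ∈ Finset.range t, m' j) < a (i + 1)))).card :=
            Finset.card_biUnion_le
        _ ≤ ∑ t ∈ Finset.Icc 1 (s - 1), (2 * k + 1) :=
            Finset.sum_le_sum (fun t _ => boundary_bound n k _ a hj.1 hj.2.1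
              hj.2.2.injOn hj.2.2.mapsTo hmax')
        _ = (s - 1) * (2 * k + 1) := by
            rw [Finset.sum_const, Nat.card_Icc, smul_eq_mul, Nat.add_sub_cancel]
    omega
end

section
/- For every word w over an alphabet Σ and every word u of the form τ_1^{r_1} ··· τ_m^{r_m} (a concatenation of m constant blocks) that is a permutation of w, there exists a jump sequence ā with w_ā = u whose number of turning indices is at most m. -/
open scoped Classical

lemma perm_exists_indexFn {α : Type*} [Inhabited α] {u w : List α} (h : u.Perm w) :
    ∃ s : ℕ → ℕ, Set.BijOn s (Set.Iio u.length) (Set.Iio w.length) ∧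
      ∀ i < u.length, w.getD (s i) default = u.getD i default := by
  induction h with
  | nil =>
    exact ⟨id, Set.bijOn_id _, by intro i hi; simp at hi⟩
  | cons x h ih =>
    rename_i l₁ l₂
    obtain ⟨s, hb, hg⟩ := ih
    refine ⟨fun i => if i = 0 then 0 else s (i - 1) + 1, ⟨?_, ?_, ?_⟩, ?_⟩
    · intro i hi
      simp only [Set.mem_Iio, List.length_cons] at *
      by_cases h0 : i = 0
      · simp [h0]
      · have hm : s (i - 1) < l₂.length := hb.mapsTo (show i - 1 ∈ Set.Iio l₁.length from by
          simp only [Set.mem_Iio]; omega)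
        simp [h0]; omega
    · intro i hi j hj hij
      simp only [Set.mem_Iio, List.length_cons] at hi hj
      by_cases h0 : i = 0 <;> by_cases h1 : j = 0 <;> simp [h0, h1] at hij ⊢
      · have := hb.injOn (show i - 1 ∈ Set.Iio l₁.length from by simp only [Set.mem_Iio]; omega)
          (show j - 1 ∈ Set.Iio l₁.length from by simp only [Set.mem_Iio]; omega) hij
        omega
    · intro y hy
      simp only [Set.mem_Iio, List.length_cons] at hy
      by_cases h0 : y = 0
      · exact ⟨0, by simp only [Set.mem_Iio, List.length_cons]; omega, by simp [h0]⟩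
      · have : y - 1 ∈ s '' (Set.Iio l₁.length) := hb.surjOn (by simp only [Set.mem_Iio]; omega)
        obtain ⟨x', hx, hxe⟩ := this
        simp only [Set.mem_Iio] at hx
        refine ⟨x' + 1, by simp only [Set.mem_Iio, List.length_cons]; omega, ?_⟩
        have hne : x' + 1 ≠ 0 := by omega
        simp only []
        rw [if_neg hne, Nat.add_sub_cancel, hxe]
        omega
    · intro i hi
      simp only [List.length_cons] at hi
      by_cases h0 : i = 0
      · simp [h0]
      · obtain ⟨k, rfl⟩ : ∃ k, i = k + 1 := ⟨i - 1, by omega⟩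
        simp only [if_neg h0, Nat.add_sub_cancel, List.getD_cons_succ]
        exact hg k (by omega)
  | swap x y l =>
    refine ⟨fun i => if i = 0 then 1 else if i = 1 then 0 else i, ⟨?_, ?_, ?_⟩, ?_⟩
    · intro i hi
      simp only [Set.mem_Iio, List.length_cons] at *
      rcases i with _ | _ | i <;> simp <;> omega
    · intro i hi j hj hij
      simp only at hij
      rcases i with _ | _ | i <;> rcases j with _ | _ | j <;> simp at hij <;> omega
    · intro z hz
      simp only [Set.mem_Iio, List.length_cons] at hz
      refine ⟨if z = 0 then 1 else if z = 1 then 0 else z, ?_, ?_⟩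
      · simp only [Set.mem_Iio, List.length_cons]
        rcases z with _ | _ | z <;> simp <;> omega
      · rcases z with _ | _ | z <;> simp
    · intro i hi
      simp only [List.length_cons] at hi
      rcases i with _ | _ | i <;> simp
  | trans h₁ h₂ ih₁ ih₂ =>
    rename_i l₁ l₂ l₃
    obtain ⟨s₁, hb₁, hg₁⟩ := ih₁
    obtain ⟨s₂, hb₂, hg₂⟩ := ih₂
    refine ⟨s₂ ∘ s₁, hb₂.comp hb₁, ?_⟩
    intro i hi
    have h1 : s₁ i < l₂.length := hb₁.mapsTo (Set.mem_Iio.mpr hi)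
    simp only [Function.comp_apply]
    rw [hg₂ _ h1, hg₁ _ hi]


lemma flatten_getD {α : Type*} (dft : α) :
    ∀ (Ls : List (List α)) (j k : ℕ) (hj : j < Ls.length),
      k < (Ls.get ⟨j, hj⟩).length →
      Ls.flatten.getD (((Ls.take j).map List.length).sum + k) dft
        = (Ls.get ⟨j, hj⟩).getD k dft := by
  intro Ls
  induction Ls with
  | nil => intro j k hj; simp at hj
  | cons x xs ih =>
    intro j k hj hk
    cases j with
    | zero =>
      simp only [List.take_zero, List.map_nil, List.sum_nil, Nat.zero_add, List.flatten_cons,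
        List.get] at *
      exact List.getD_append _ _ _ _ hk
    | succ j =>
      simp only [List.take_succ_cons, List.map_cons, List.sum_cons, List.flatten_cons,
        List.get, List.length_cons] at *
      rw [Nat.add_assoc, List.getD_append_right _ _ _ _ (Nat.le_add_right _ _),
        Nat.add_sub_cancel_left]
      exact ih j k (by have h2 : (x :: xs).length = xs.length + 1 := rfl; omega) hk

lemma changes_le {n : ℕ} (d : ℕ → Bool) (g : ℕ → ℕ)
    (h : ∀ i < n, g i ≤ g (i + 1) ∧ (d i ≠ d (i + 1) → g i < g (i + 1))) :
    ((Finset.range n).filter (fun i => d i ≠ d (i + 1))).card + g 0 ≤ g n := by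
  induction n with
  | zero => simp
  | succ n ih =>
    rw [Finset.range_add_one, Finset.filter_insert]
    have hn := h n (by omega)
    have ih' := ih (fun i hi => h i (by omega))
    by_cases hd : d n ≠ d (n + 1)
    · rw [if_pos hd, Finset.card_insert_of_notMem (by simp)]
      have := hn.2 hd
      omega
    · rw [if_neg hd]
      omega

lemma bijOn_Iio_of (n : ℕ) (f : ℕ → ℕ) (hm : ∀ i < n, f i < n)
    (hinj : ∀ i < n, ∀ j < n, f i = f j → i = j) :
    Set.BijOn f (Set.Iio n) (Set.Iio n) := by
  refine ⟨fun i hi => hm i hi, fun i hi j hj hij => hinj i hi j hj hij, ?_⟩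
  have himg : Finset.image f (Finset.range n) = Finset.range n := by
    apply Finset.eq_of_subset_of_card_le
    · intro y hy
      simp only [Finset.mem_image, Finset.mem_range] at *
      obtain ⟨x, hx, rfl⟩ := hy
      exact hm x hx
    · rw [Finset.card_image_of_injOn, Finset.card_range]
      intro i hi j hj
      simp only [Finset.mem_coe, Finset.mem_range] at hi hj
      exact hinj i hi j hj
  intro y hy
  have hy' : y ∈ Finset.image f (Finset.range n) := by
    rw [himg]; exact Finset.mem_range.mpr hy
  obtain ⟨x, hx, hxe⟩ := Finset.mem_image.mp hy'
  exact ⟨x, Finset.mem_range.mp hx, hxe⟩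

/-- if `u = τ_1^{r_1} ⋯ τ_m^{r_m}` is a permutation of `w`, then there
is a jump sequence `ā` with `w_ā = u` and at most `m` turning indices. -/
theorem rev_le_blocks {α : Type*} [Inhabited α] (w u : List α) (m : ℕ)
    (τ : Fin m → α) (r : Fin m → ℕ)
    (hu : u = (List.ofFn (fun j => List.replicate (r j) (τ j))).flatten)
    (hperm : u.Perm w) :
    ∃ a : ℕ → ℕ, IsJumpSeq w.length a ∧ applyJump a w = u ∧
      turnCount w.length a ≤ m := by
  classical
  set n := w.length with hn
  have hlen : u.length = n := hperm.length_eq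
  by_cases hn0 : n = 0
  · refine ⟨fun t => t, ⟨rfl, rfl, Set.bijOn_id _⟩, ?_, ?_⟩
    · have hw : w = [] := List.length_eq_zero_iff.mp (by omega)
      have hu0 : u = [] := List.length_eq_zero_iff.mp (by omega)
      rw [hw, hu0]; rfl
    · rw [turnCount, hn0]
      simp
  -- main case
  obtain ⟨s, hsbij, hsget⟩ := perm_exists_indexFn hperm
  rw [hlen] at hsbij hsget
  set Ls : List (List α) := List.ofFn (fun j => List.replicate (r j) (τ j)) with hLs
  set M : List ℕ := List.ofFn (fun j : Fin m => r j) with hM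
  have hMlen : M.length = m := by simp [hM]
  have hLslen : Ls.length = m := by simp [hLs]
  have hLsM : Ls.map List.length = M := by
    simp [hLs, hM, Function.comp_def]
  set start : ℕ → ℕ := fun j => (M.take j).sum with hstart
  have hstart_mono : ∀ {j j'}, j ≤ j' → start j ≤ start j' := by
    intro j j' hj
    have h1 : M.take j = (M.take j').take j := by rw [List.take_take, Nat.min_eq_left hj]
    calc (M.take j).sum ≤ (M.take j).sum + ((M.take j').drop j).sum := Nat.le_add_right _ _
      _ = (M.take j').sum := by rw [h1, List.sum_take_add_sum_drop]
  have hstart_succ : ∀ j (hj : j < m), start (j + 1) = start j + r ⟨j, hj⟩ := by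
    intro j hj
    have h1 := List.sum_take_succ M j (by omega)
    have h2 : M[j]'(by omega) = r ⟨j, hj⟩ := by
      simp [hM, List.getElem_ofFn]
    rw [hstart]
    simp only
    rw [h1, h2]
  have hstartm : start m = n := by
    have h1 : M.take m = M := List.take_of_length_le (le_of_eq hMlen)
    have h2 : u.length = M.sum := by
      rw [hu, List.length_flatten, hLsM]
    rw [hstart]; simp only; rw [h1]; omega
  have hstart0 : start 0 = 0 := by simp [hstart]
  have hm0 : 0 < m := by
    rcases Nat.eq_zero_or_pos m with h | h
    · exfalso; apply hn0; rw [← hstartm, h, hstart0]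
    · exact h
  set blk : ℕ → ℕ := fun i => sInf {j | i < start (j + 1)} with hblk
  have hblk_spec : ∀ i < n, start (blk i) ≤ i ∧ i < start (blk i + 1) ∧ blk i < m := by
    intro i hi
    have hne : (m - 1) ∈ {j | i < start (j + 1)} := by
      simp only [Set.mem_setOf_eq]
      have he : m - 1 + 1 = m := by omega
      rw [he, hstartm]; exact hi
    have hmem : blk i ∈ {j | i < start (j + 1)} := Nat.sInf_mem ⟨_, hne⟩
    have hle : blk i ≤ m - 1 := Nat.sInf_le hne
    refine ⟨?_, hmem, by omega⟩
    rcases Nat.eq_zero_or_pos (blk i) with h0 | h0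
    · rw [h0, hstart0]; omega
    · by_contra hlt
      push_neg at hlt
      have hmem2 : blk i - 1 ∈ {j | i < start (j + 1)} := by
        simp only [Set.mem_setOf_eq]
        have he : blk i - 1 + 1 = blk i := by omega
        rw [he]; omega
      have := Nat.sInf_le hmem2
      have hbi : blk i = sInf {j | i < start (j + 1)} := rfl
      omega
  have hblk_uniq : ∀ j, j < m → ∀ x, start j ≤ x → x < start (j + 1) → blk x = j := by
    intro j hj x h1 h2
    have hxn : x < n := by
      have := hstart_mono (show j + 1 ≤ m by omega)
      omega
    obtain ⟨g1, g2, g3⟩ := hblk_spec x hxn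
    by_contra hne
    rcases Nat.lt_or_ge (blk x) j with h | h
    · have := hstart_mono (show blk x + 1 ≤ j by omega)
      omega
    · have h' : j + 1 ≤ blk x := by omega
      have := hstart_mono h'
      omega
  have hblk_mono : ∀ i i', i ≤ i' → i' < n → blk i ≤ blk i' := by
    intro i i' h hi'
    apply Nat.sInf_le
    simp only [Set.mem_setOf_eq]
    have := (hblk_spec i' hi').2.1
    omega
  set In : ℕ → Finset ℕ := fun j => Finset.Ico (start j) (start (j + 1)) with hIn
  have hIn_sub : ∀ j < m, ∀ x ∈ In j, x < n := by
    intro j hj x hx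
    rw [hIn] at hx
    simp only [Finset.mem_Ico] at hx
    have : start (j + 1) ≤ start m := hstart_mono (by omega)
    omega
  set W : ℕ → Finset ℕ := fun j => (In j).image s with hW
  have hWsub : ∀ j < m, ∀ y ∈ W j, y < n := by
    intro j hj y hy
    rw [hW] at hy
    simp only [Finset.mem_image] at hy
    obtain ⟨x, hx, rfl⟩ := hy
    exact hsbij.mapsTo (Set.mem_Iio.mpr (hIn_sub j hj x hx))
  set L : ℕ → List ℕ := fun j => (W j).sort (· ≤ ·) with hL
  have hLlen : ∀ j < m, (L j).length = start (j + 1) - start j := by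
    intro j hj
    rw [hL]
    simp only [Finset.length_sort]
    rw [hW]
    simp only
    rw [Finset.card_image_of_injOn, hIn]
    · simp [Nat.card_Ico]
    · intro x hx y hy hxy
      exact hsbij.injOn (Set.mem_Iio.mpr (hIn_sub j hj x hx))
        (Set.mem_Iio.mpr (hIn_sub j hj y hy)) hxy
  set q : ℕ → ℕ := fun p =>
    if blk p % 2 = 0 then p - start (blk p) else start (blk p + 1) - 1 - p with hq
  set σ' : ℕ → ℕ := fun p => (L (blk p)).getD (q p) 0 with hσ
  have hq_lt : ∀ p < n, q p < (L (blk p)).length := by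
    intro p hp
    obtain ⟨h1, h2, h3⟩ := hblk_spec p hp
    rw [hLlen _ h3, hq]
    simp only
    split <;> omega
  have hmemW : ∀ p < n, σ' p ∈ W (blk p) := by
    intro p hp
    have hlt := hq_lt p hp
    show (L (blk p)).getD (q p) 0 ∈ W (blk p)
    rw [List.getD_eq_getElem _ _ hlt]
    have hmem : (L (blk p))[q p] ∈ L (blk p) := List.getElem_mem _
    exact (Finset.mem_sort _).mp hmem
  have hσlt : ∀ p < n, σ' p < n := fun p hp =>
    hWsub _ (hblk_spec p hp).2.2 _ (hmemW p hp)
  have hWcap : ∀ j < m, ∀ j' < m, ∀ y, y ∈ W j → y ∈ W j' → j = j' := by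
    intro j hj j' hj' y hy hy'
    rw [hW] at hy hy'
    simp only [Finset.mem_image] at hy hy'
    obtain ⟨x, hx, hxy⟩ := hy
    obtain ⟨x', hx', hxy'⟩ := hy'
    have hxx : x = x' := hsbij.injOn (Set.mem_Iio.mpr (hIn_sub j hj x hx))
      (Set.mem_Iio.mpr (hIn_sub j' hj' x' hx')) (by rw [hxy, hxy'])
    subst hxx
    rw [hIn] at hx hx'
    simp only [Finset.mem_Ico] at hx hx'
    by_contra hne
    rcases Nat.lt_or_ge j j' with h | h
    · have : start (j + 1) ≤ start j' := hstart_mono h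
      omega
    · have hlt : j' < j := by omega
      have : start (j' + 1) ≤ start j := hstart_mono hlt
      omega
  have hsorted : ∀ j, (L j).Pairwise (· < ·) := fun j => (Finset.sortedLT_sort _).pairwise
  have hLmono : ∀ j, ∀ i1 i2, i1 < i2 → i2 < (L j).length →
      (L j).getD i1 0 < (L j).getD i2 0 := by
    intro j i1 i2 h12 h2
    rw [List.getD_eq_getElem _ _ (by omega), List.getD_eq_getElem _ _ h2]
    exact List.Pairwise.rel_get_of_lt (hsorted j) (by exact h12)
  have hσinj : ∀ p < n, ∀ p' < n, σ' p = σ' p' → p = p' := by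
    intro p hp p' hp' he
    have hbe : blk p = blk p' :=
      hWcap _ (hblk_spec p hp).2.2 _ (hblk_spec p' hp').2.2 (σ' p) (hmemW p hp)
        (he ▸ hmemW p' hp')
    have hqe : q p = q p' := by
      by_contra hne
      have he' : (L (blk p)).getD (q p) 0 = (L (blk p')).getD (q p') 0 := he
      rw [← hbe] at he'
      rcases Nat.lt_or_ge (q p) (q p') with h | h
      · have := hLmono (blk p) (q p) (q p') h (by rw [hbe]; exact hq_lt p' hp')
        omega
      · have hlt2 : q p' < q p := by omega
        have := hLmono (blk p) (q p') (q p) hlt2 (hq_lt p hp)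
        omega
    have h1 := hblk_spec p hp
    have h2 := hblk_spec p' hp'
    have hqe' : (if blk p % 2 = 0 then p - start (blk p) else start (blk p + 1) - 1 - p)
        = (if blk p' % 2 = 0 then p' - start (blk p') else start (blk p' + 1) - 1 - p') := hqe
    rw [← hbe] at hqe' h2
    split at hqe' <;> omega
  have hσbij := bijOn_Iio_of n σ' hσlt hσinj
  set a : ℕ → ℕ := fun t => if t = 0 then 0 else if t ≤ n then σ' (t - 1) + 1 else n + 1
    with ha
  have ha0 : a 0 = 0 := rfl
  have hat : ∀ t, 1 ≤ t → t ≤ n → a t = σ' (t - 1) + 1 := by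
    intro t h1 h2
    show (if t = 0 then 0 else if t ≤ n then σ' (t - 1) + 1 else n + 1) = _
    rw [if_neg (by omega), if_pos h2]
  have han1 : a (n + 1) = n + 1 := by
    show (if n + 1 = 0 then 0 else if n + 1 ≤ n then σ' (n + 1 - 1) + 1 else n + 1) = _
    rw [if_neg (by omega), if_neg (by omega)]
  refine ⟨a, ⟨ha0, han1, ?_, ?_, ?_⟩, ?_, ?_⟩
  · -- MapsTo
    intro t ht
    simp only [Set.mem_Icc] at ht ⊢
    rw [hat t ht.1 ht.2]
    have := hσlt (t - 1) (by omega)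
    omega
  · -- InjOn
    intro t ht t' ht' he
    simp only [Set.mem_Icc] at ht ht'
    rw [hat t ht.1 ht.2, hat t' ht'.1 ht'.2] at he
    have := hσinj (t - 1) (by omega) (t' - 1) (by omega) (by omega)
    omega
  · -- SurjOn
    intro y hy
    simp only [Set.mem_Icc] at hy
    have : y - 1 ∈ σ' '' (Set.Iio n) := hσbij.surjOn (Set.mem_Iio.mpr (by omega))
    obtain ⟨x, hx, hxe⟩ := this
    simp only [Set.mem_Iio] at hx
    refine ⟨x + 1, Set.mem_Icc.mpr (by omega), ?_⟩
    rw [hat (x + 1) (by omega) (by omega)]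
    simp only [Nat.add_sub_cancel, hxe]
    omega
  · -- applyJump a w = u
    have hu_val : ∀ p < n, ∀ hj : blk p < m, u.getD p default = τ ⟨blk p, hj⟩ := by
      intro p hp hj
      obtain ⟨h1, h2, _⟩ := hblk_spec p hp
      have hjl : blk p < Ls.length := by omega
      have hget : Ls.get ⟨blk p, hjl⟩ = List.replicate (r ⟨blk p, hj⟩) (τ ⟨blk p, hj⟩) :=
        List.get_ofFn _ _
      have hk : p - start (blk p) < (Ls.get ⟨blk p, hjl⟩).length := by
        rw [hget, List.length_replicate]
        have := hstart_succ (blk p) hj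
        omega
      have hidx : ((Ls.take (blk p)).map List.length).sum = start (blk p) := by
        rw [List.map_take, hLsM]
      have := flatten_getD default Ls (blk p) (p - start (blk p)) hjl hk
      rw [hidx] at this
      have hpe : start (blk p) + (p - start (blk p)) = p := by omega
      rw [hpe] at this
      rw [hu, this, hget]
      rw [List.getD_eq_getElem _ _ (by rw [List.length_replicate]; rw [hget, List.length_replicate] at hk; exact hk)]
      exact List.getElem_replicate _
    have hw_val : ∀ p < n, w.getD (σ' p) default = u.getD p default := by
      intro p hp
      have hj := (hblk_spec p hp).2.2
      have hm := hmemW p hp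
      rw [hW] at hm
      simp only [Finset.mem_image] at hm
      obtain ⟨x, hx, hxe⟩ := hm
      simp only [hIn, Finset.mem_Ico] at hx
      have hxn : x < n := by
        have := hstart_mono (show blk p + 1 ≤ m by omega)
        omega
      rw [← hxe, hsget x hxn]
      have hbx : blk x = blk p := hblk_uniq (blk p) hj x hx.1 hx.2
      rw [hu_val x hxn (by rw [hbx]; exact hj), hu_val p hp hj]
      congr 1
      exact Fin.ext (by simp [hbx])
    apply List.ext_getElem
    · simp [applyJump, hlen, hn]
    · intro i h1 h2
      simp only [applyJump, List.getElem_map, List.getElem_range]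
      have hi : i < n := by simpa [applyJump] using h1
      rw [hat (i + 1) (by omega) (by omega)]
      simp only [Nat.add_sub_cancel]
      rw [hw_val i hi]
      exact List.getD_eq_getElem u default h2
  · -- turnCount
    set d : ℕ → Bool := fun i => decide (a i < a (i + 1)) with hd
    have hane : ∀ t ≤ n, a t ≠ a (t + 1) := by
      intro t ht
      rcases Nat.eq_zero_or_pos t with rfl | h1
      · rw [ha0, hat 1 (by omega) (by omega)]
        omega
      · rcases Nat.lt_or_ge t n with h2 | h2
        · rw [hat t h1 (by omega), hat (t + 1) (by omega) (by omega)]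
          intro hcon
          have hred : σ' (t + 1 - 1) = σ' t := rfl
          have heq : σ' (t - 1) = σ' t := by omega
          have := hσinj (t - 1) (by omega) t (by omega) heq
          omega
        · have ht' : t = n := by omega
          rw [ht', han1, hat n (by omega) (le_refl n)]
          have := hσlt (n - 1) (by omega)
          omega
    have hiff : ∀ t, 1 ≤ t → t ≤ n → (IsTurn a t ↔ d (t - 1) ≠ d t) := by
      intro t h1 h2
      have hne1 := hane (t - 1) (by omega)
      have hne2 := hane t h2
      have ht1 : t - 1 + 1 = t := by omega
      rw [ht1] at hne1
      have hdt1 : d (t - 1) = decide (a (t - 1) < a t) := by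
        show decide (a (t - 1) < a (t - 1 + 1)) = _
        rw [ht1]
      have hdt : d t = decide (a t < a (t + 1)) := rfl
      rw [hdt1, hdt, ne_eq, decide_eq_decide]
      unfold IsTurn
      constructor
      · intro h
        omega
      · intro h
        omega
    have hd0 : d 0 = true := by
      show decide (a 0 < a 1) = true
      rw [ha0, hat 1 (by omega) (by omega)]
      simp
    have hdn : d n = true := by
      show decide (a n < a (n + 1)) = true
      rw [han1, hat n (by omega) (le_refl n)]
      have := hσlt (n - 1) (by omega)
      simp
      omega
    set e : ℕ → Bool := fun i => if i < n then decide (blk i % 2 = 0) else true with he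
    set B : ℕ → ℕ := fun i => if i < n then blk i + 1 else m + 1 with hB
    set g : ℕ → ℕ := fun i => if d i = e i then B i else B i - 1 with hg
    have hgb : ∀ i, B i - 1 ≤ g i ∧ g i ≤ B i := by
      intro i
      show B i - 1 ≤ (if d i = e i then B i else B i - 1) ∧
        (if d i = e i then B i else B i - 1) ≤ B i
      split <;> omega
    have hS1 : ∀ i, 1 ≤ i → i < n → blk (i - 1) = blk i → d i = decide (blk i % 2 = 0) := by
      intro i h1 h2 hbe
      have hsp := hblk_spec i h2
      have hsp' := hblk_spec (i - 1) (by omega)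
      rw [hbe] at hsp'
      have hai : a i = σ' (i - 1) + 1 := hat i h1 (by omega)
      have hai1 : a (i + 1) = σ' i + 1 := hat (i + 1) (by omega) (by omega)
      have hdi : d i = decide (a i < a (i + 1)) := rfl
      have hσi : σ' i = (L (blk i)).getD (q i) 0 := rfl
      have hσi' : σ' (i - 1) = (L (blk (i - 1))).getD (q (i - 1)) 0 := rfl
      rw [hbe] at hσi'
      have hqi : q i = (if blk i % 2 = 0 then i - start (blk i)
          else start (blk i + 1) - 1 - i) := rfl
      have hqi' : q (i - 1) = (if blk (i - 1) % 2 = 0 then (i - 1) - start (blk (i - 1))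
          else start (blk (i - 1) + 1) - 1 - (i - 1)) := rfl
      rw [hbe] at hqi'
      by_cases hpar : blk i % 2 = 0
      · rw [if_pos hpar] at hqi hqi'
        have hlt := hLmono (blk i) (q (i - 1)) (q i) (by omega) (hq_lt i h2)
        rw [← hσi, ← hσi'] at hlt
        rw [hdi, hai, hai1, decide_eq_decide]
        omega
      · rw [if_neg hpar] at hqi hqi'
        have hlen' := hq_lt (i - 1) (by omega)
        rw [hbe] at hlen'
        have hlt := hLmono (blk i) (q i) (q (i - 1)) (by omega) hlen'
        rw [← hσi, ← hσi'] at hlt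
        rw [hdi, hai, hai1, decide_eq_decide]
        omega
    have hgn : g n = m + 1 := by
      have hen : e n = true := by
        show (if n < n then decide (blk n % 2 = 0) else true) = true
        rw [if_neg (by omega)]
      have hBn : B n = m + 1 := by
        show (if n < n then blk n + 1 else m + 1) = m + 1
        rw [if_neg (by omega)]
      show (if d n = e n then B n else B n - 1) = m + 1
      rw [hdn, hen, if_pos rfl, hBn]
    have hg0 : 1 ≤ g 0 := by
      have hB0 : B 0 = blk 0 + 1 := by
        show (if 0 < n then blk 0 + 1 else m + 1) = blk 0 + 1
        rw [if_pos (by omega)]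
      have he0 : e 0 = decide (blk 0 % 2 = 0) := by
        show (if 0 < n then decide (blk 0 % 2 = 0) else true) = decide (blk 0 % 2 = 0)
        rw [if_pos (by omega)]
      by_cases hp : blk 0 % 2 = 0
      · have hde : d 0 = e 0 := by rw [hd0, he0]; simp [hp]
        have : g 0 = B 0 := by
          show (if d 0 = e 0 then B 0 else B 0 - 1) = B 0
          rw [if_pos hde]
        omega
      · have hblk0 : 1 ≤ blk 0 := by omega
        have := hgb 0
        omega
    have hF1 : ∀ i < n, g i ≤ g (i + 1) ∧ (d i ≠ d (i + 1) → g i < g (i + 1)) := by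
      intro i hi
      have hgbi := hgb i
      have hgbi1 := hgb (i + 1)
      have hBi : B i = blk i + 1 := by
        show (if i < n then blk i + 1 else m + 1) = blk i + 1
        rw [if_pos hi]
      have hbm : blk i < m := (hblk_spec i hi).2.2
      by_cases hin : i + 1 = n
      · have hgn1 : g (i + 1) = m + 1 := by rw [hin]; exact hgn
        exact ⟨by omega, fun _ => by omega⟩
      · have hi1 : i + 1 < n := by omega
        have hmono := hblk_mono i (i + 1) (by omega) hi1
        have hBi1 : B (i + 1) = blk (i + 1) + 1 := by
          show (if i + 1 < n then blk (i + 1) + 1 else m + 1) = blk (i + 1) + 1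
          rw [if_pos hi1]
        have hei : e i = decide (blk i % 2 = 0) := by
          show (if i < n then decide (blk i % 2 = 0) else true) = decide (blk i % 2 = 0)
          rw [if_pos hi]
        have hei1 : e (i + 1) = decide (blk (i + 1) % 2 = 0) := by
          show (if i + 1 < n then decide (blk (i + 1) % 2 = 0) else true)
            = decide (blk (i + 1) % 2 = 0)
          rw [if_pos hi1]
        rcases Nat.eq_or_lt_of_le hmono with hbe | hblt
        · have hde : d (i + 1) = e (i + 1) := by
            rw [hei1]
            exact hS1 (i + 1) (by omega) hi1 (by simpa using hbe)
          have hgi1 : g (i + 1) = B (i + 1) := by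
            show (if d (i + 1) = e (i + 1) then B (i + 1) else B (i + 1) - 1) = B (i + 1)
            rw [if_pos hde]
          refine ⟨by omega, ?_⟩
          intro hne
          have hdie : d i ≠ e i := by
            intro hcon
            apply hne
            rw [hcon, hde, hei, hei1, hbe]
          have hgi : g i = B i - 1 := by
            show (if d i = e i then B i else B i - 1) = B i - 1
            rw [if_neg hdie]
          omega
        · refine ⟨by omega, ?_⟩
          intro hne
          by_contra hge
          push_neg at hge
          have hb1 : blk (i + 1) = blk i + 1 := by omega
          have hdi_e : d i = e i := by
            by_contra hc
            have : g i = B i - 1 := by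
              show (if d i = e i then B i else B i - 1) = B i - 1
              rw [if_neg hc]
            omega
          have hdi1_ne : d (i + 1) ≠ e (i + 1) := by
            intro hc
            have : g (i + 1) = B (i + 1) := by
              show (if d (i + 1) = e (i + 1) then B (i + 1) else B (i + 1) - 1) = B (i + 1)
              rw [if_pos hc]
            omega
          have hpar : decide ((blk i + 1) % 2 = 0) = !decide (blk i % 2 = 0) := by
            by_cases hp : blk i % 2 = 0
            · have h2 : ¬((blk i + 1) % 2 = 0) := by omega
              simp [hp, h2]
            · have h2 : (blk i + 1) % 2 = 0 := by omega
              simp [hp, h2]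
          apply hne
          have hbool : ∀ x y : Bool, x ≠ y → x = !y := by decide
          have hflip : d (i + 1) = !e (i + 1) := hbool _ _ hdi1_ne
          rw [hdi_e, hei, hflip, hei1, hb1, hpar]
          simp
    have hcle := changes_le d g hF1
    have htc : turnCount n a = ((Finset.range n).filter (fun i => d i ≠ d (i + 1))).card := by
      rw [turnCount]
      have himg : (Finset.Icc 1 n).filter (fun i => IsTurn a i)
          = ((Finset.range n).filter (fun i => d i ≠ d (i + 1))).image (· + 1) := by
        ext t
        simp only [Finset.mem_filter, Finset.mem_Icc, Finset.mem_image, Finset.mem_range]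
        constructor
        · rintro ⟨⟨h1, h2⟩, ht⟩
          refine ⟨t - 1, ⟨by omega, ?_⟩, by omega⟩
          have h3 := (hiff t h1 h2).mp ht
          have ht1 : t - 1 + 1 = t := by omega
          rw [ht1]
          exact h3
        · rintro ⟨i, ⟨hi, hdi⟩, rfl⟩
          refine ⟨⟨by omega, by omega⟩, ?_⟩
          exact (hiff (i + 1) (by omega) (by omega)).mpr (by simpa using hdi)
      rw [himg, Finset.card_image_of_injective _ (add_left_injective 1)]
    rw [htc]
    omega
end

section
/- Let L = a*b* as a language over {a,b}. For every word w ∈ {a,b}*, there is a jump sequence ā with w_ā ∈ L and at most 2 turning indices; i.e., the reversal semantics of a*b* is bounded by 2. However, for the word b^n a^n, every jump sequence ā with w_ā ∈ a*b* satisfies a_1 ≥ n+1, so the maximum-jump cost of ā is at least n; hence the maximum-jump semantics of a*b* is unbounded. -/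
open scoped Classical

/-- The language `a*b*` over the two-letter alphabet `Fin 2` (`a = 0`, `b = 1`). -/
def LangAB : Language (Fin 2) :=
  {w | ∃ p q : ℕ, w = List.replicate p (0 : Fin 2) ++ List.replicate q (1 : Fin 2)}

/-! ### Auxiliary construction -/

def zList (w : List (Fin 2)) : List ℕ :=
  ((List.range w.length).filter (fun i => w.getD i default == 0)).map (· + 1)

def oList (w : List (Fin 2)) : List ℕ :=
  ((List.range w.length).filter (fun i => !(w.getD i default == 0))).map (· + 1)

def lList (w : List (Fin 2)) : List ℕ := zList w ++ (oList w).reverse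

def jumpA (w : List (Fin 2)) : ℕ → ℕ :=
  fun i => if i = 0 then 0 else if i ≤ w.length then (lList w).getD (i - 1) 0 else i

lemma lList_perm (w : List (Fin 2)) :
    (lList w).Perm ((List.range w.length).map (· + 1)) := by
  have h1 : ((List.range w.length).filter (fun i => w.getD i default == 0) ++
      (List.range w.length).filter (fun i => !(w.getD i default == 0))).Perm
      (List.range w.length) := List.filter_append_perm _ _
  refine (List.Perm.append_left _ (List.reverse_perm _)).trans ?_
  rw [zList, oList, ← List.map_append]
  exact h1.map _

lemma lList_length (w : List (Fin 2)) : (lList w).length = w.length := by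
  rw [(lList_perm w).length_eq, List.length_map, List.length_range]

lemma lList_mem (w : List (Fin 2)) (v : ℕ) : v ∈ lList w ↔ 1 ≤ v ∧ v ≤ w.length := by
  rw [(lList_perm w).mem_iff, List.mem_map]
  constructor
  · rintro ⟨i, hi, rfl⟩; rw [List.mem_range] at hi; omega
  · rintro ⟨h1, h2⟩; exact ⟨v - 1, List.mem_range.2 (by omega), by omega⟩

lemma lList_nodup (w : List (Fin 2)) : (lList w).Nodup := by
  rw [(lList_perm w).nodup_iff]
  exact List.nodup_range.map (fun a b h => by omega)

lemma zList_pairwise (w : List (Fin 2)) : List.Pairwise (· < ·) (zList w) :=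
  (List.pairwise_lt_range.filter _).map _ (fun a b h => by omega)

lemma oList_pairwise (w : List (Fin 2)) : List.Pairwise (· < ·) (oList w) :=
  (List.pairwise_lt_range.filter _).map _ (fun a b h => by omega)

lemma oList_rev_pairwise (w : List (Fin 2)) : List.Pairwise (· > ·) (oList w).reverse :=
  List.pairwise_reverse.2 (oList_pairwise w)

lemma jumpA_eq (w : List (Fin 2)) {i : ℕ} (h1 : 1 ≤ i) (h2 : i ≤ w.length) :
    jumpA w i = (lList w)[i - 1]'(by rw [lList_length]; omega) := by
  rw [jumpA, if_neg (by omega), if_pos h2, List.getD_eq_getElem]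

lemma applyJump_jumpA (w : List (Fin 2)) :
    applyJump (jumpA w) w = (lList w).map (fun v => w.getD (v - 1) default) := by
  apply List.ext_getElem
  · simp [applyJump, lList_length]
  · intro i hi1 hi2
    have hin : i < w.length := by simpa [applyJump] using hi1
    simp only [applyJump, List.getElem_map, List.getElem_range]
    rw [jumpA_eq w (by omega) (by omega)]
    simp

lemma zList_map (w : List (Fin 2)) :
    (zList w).map (fun v => w.getD (v - 1) default) =
      List.replicate (zList w).length (0 : Fin 2) := by
  rw [List.eq_replicate_iff]
  refine ⟨by simp, ?_⟩
  intro b hb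
  rw [List.mem_map] at hb
  obtain ⟨v, hv, rfl⟩ := hb
  rw [zList, List.mem_map] at hv
  obtain ⟨i, hi, rfl⟩ := hv
  rw [List.mem_filter] at hi
  have h0 : w.getD i default = 0 := by simpa using hi.2
  simpa using h0

lemma oList_rev_map (w : List (Fin 2)) :
    ((oList w).reverse).map (fun v => w.getD (v - 1) default) =
      List.replicate (oList w).length (1 : Fin 2) := by
  rw [List.eq_replicate_iff]
  refine ⟨by simp, ?_⟩
  intro b hb
  rw [List.mem_map, ] at hb
  obtain ⟨v, hv, rfl⟩ := hb
  rw [List.mem_reverse, oList, List.mem_map] at hv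
  obtain ⟨i, hi, rfl⟩ := hv
  rw [List.mem_filter] at hi
  have h0 : ¬ w.getD i default = 0 := by simpa using hi.2
  have : w.getD i default = 1 := by omega
  simpa using this

lemma lList_length' (w : List (Fin 2)) :
    (lList w).length = (zList w).length + (oList w).reverse.length := by
  simp [lList]

lemma lList_getElem_lt (w : List (Fin 2)) {j : ℕ} (h : j < (zList w).length) :
    (lList w)[j]'(by rw [lList_length']; omega) = (zList w)[j] :=
  List.getElem_append_left h

lemma lList_getElem_ge (w : List (Fin 2)) {j : ℕ} (h1 : (zList w).length ≤ j)
    (h2 : j < (lList w).length) :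
    (lList w)[j]'h2 = ((oList w).reverse)[j - (zList w).length]'(by
      rw [lList_length'] at h2; omega) :=
  List.getElem_append_right h1

lemma turns_le_two (n t : ℕ) (a : ℕ → ℕ)
    (h1 : ∀ i, i < t → a i < a (i + 1))
    (h2 : ∀ i, t ≤ i → i < n → a (i + 1) < a i) :
    turnCount n a ≤ 2 := by
  have hsub : ((Finset.Icc 1 n).filter (fun i => IsTurn a i)) ⊆ {t, n} := by
    intro i hi
    rw [Finset.mem_filter, Finset.mem_Icc] at hi
    obtain ⟨⟨h1i, hin⟩, hturn⟩ := hi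
    rw [Finset.mem_insert, Finset.mem_singleton]
    by_contra hc
    push_neg at hc
    obtain ⟨hit, hn⟩ := hc
    rcases lt_or_gt_of_ne hit with hlt | hgt
    · have e1 : a (i - 1) < a i := by
        have := h1 (i - 1) (by omega)
        rwa [Nat.sub_add_cancel h1i] at this
      have e2 : a i < a (i + 1) := h1 i hlt
      rcases hturn with ⟨_, h⟩ | ⟨h, _⟩ <;> omega
    · have e1 : a i < a (i - 1) := by
        have := h2 (i - 1) (by omega) (by omega)
        rwa [Nat.sub_add_cancel h1i] at this
      have e2 : a (i + 1) < a i := h2 i (by omega) (by omega)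
      rcases hturn with ⟨h, _⟩ | ⟨_, h⟩ <;> omega
  calc turnCount n a ≤ ({t, n} : Finset ℕ).card := Finset.card_le_card hsub
    _ ≤ 2 := by
        refine (Finset.card_insert_le _ _).trans ?_
        simp


lemma jumpA_isJumpSeq (w : List (Fin 2)) : IsJumpSeq w.length (jumpA w) := by
  set n := w.length with hn
  have hlen := lList_length w
  refine ⟨by simp [jumpA], ?_, ?_, ?_, ?_⟩
  · rw [jumpA, if_neg (by omega), if_neg (by omega)]
  · -- MapsTo
    intro i hi
    rw [Set.mem_Icc] at hi ⊢
    rw [jumpA_eq w hi.1 hi.2]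
    exact (lList_mem w _).1 (List.getElem_mem _)
  · -- InjOn
    intro i hi j hj hij
    rw [Set.mem_Icc] at hi hj
    rw [jumpA_eq w hi.1 hi.2, jumpA_eq w hj.1 hj.2] at hij
    have := ((lList_nodup w).getElem_inj_iff).1 hij
    omega
  · -- SurjOn
    intro v hv
    rw [Set.mem_Icc] at hv
    have hvl : v ∈ lList w := (lList_mem w v).2 hv
    obtain ⟨j, hj, hjv⟩ := List.getElem_of_mem hvl
    refine ⟨j + 1, Set.mem_Icc.2 ⟨by omega, by omega⟩, ?_⟩
    rw [jumpA_eq w (by omega) (by omega)]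
    simpa using hjv

lemma jumpA_lang (w : List (Fin 2)) : applyJump (jumpA w) w ∈ LangAB := by
  refine ⟨(zList w).length, (oList w).length, ?_⟩
  rw [applyJump_jumpA, lList, List.map_append, zList_map, oList_rev_map]

lemma jumpA_turns (w : List (Fin 2)) : turnCount w.length (jumpA w) ≤ 2 := by
  set n := w.length with hn
  rcases Nat.eq_zero_or_pos n with h0 | hpos
  · rw [turnCount, h0]
    rw [Finset.Icc_eq_empty (by omega)]
    simp
  have hlen := lList_length w
  obtain ⟨k, hk⟩ : ∃ k, k = (zList w).length := ⟨_, rfl⟩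
  have hkn : k ≤ n := by
    have : (lList w).length = (zList w).length + (oList w).reverse.length :=
      lList_length' w
    omega
  -- basic increasing/decreasing facts
  have hC : jumpA w 0 < jumpA w 1 := by
    rw [jumpA_eq w le_rfl hpos]
    have := (lList_mem w _).1 (List.getElem_mem (by omega : 1 - 1 < (lList w).length))
    simpa [jumpA] using Nat.lt_of_lt_of_le Nat.zero_lt_one this.1
  have hA : ∀ i, 1 ≤ i → i < k → jumpA w i < jumpA w (i + 1) := by
    intro i h1 h2
    rw [jumpA_eq w (i := i) h1 (by omega), jumpA_eq w (i := i + 1) (by omega) (by omega),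
      lList_getElem_lt w (by omega), lList_getElem_lt w (by omega)]
    exact List.pairwise_iff_getElem.1 (zList_pairwise w) _ _ _ _ (by omega)
  have hB : ∀ i, k < i → i < n → jumpA w (i + 1) < jumpA w i := by
    intro i h1 h2
    rw [jumpA_eq w (i := i) (by omega) (by omega),
      jumpA_eq w (i := i + 1) (by omega) (by omega),
      lList_getElem_ge w (by omega) (by omega), lList_getElem_ge w (by omega) (by omega)]
    exact List.pairwise_iff_getElem.1 (oList_rev_pairwise w) _ _ _ _ (by omega)
  rcases Nat.eq_or_lt_of_le hkn with hkeq | hklt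
  · -- k = n : increasing all the way
    refine turns_le_two n n _ (fun i hi => ?_) (fun i h1 h2 => by omega)
    rcases Nat.eq_zero_or_pos i with rfl | hip
    · exact hC
    · exact hA i hip (by omega)
  · rcases Nat.eq_zero_or_pos k with hk0 | hkpos
    · -- k = 0 : peak at 1
      refine turns_le_two n 1 _ (fun i hi => ?_) (fun i h1 h2 => hB i (by omega) h2)
      have : i = 0 := by omega
      subst this; exact hC
    · -- junction comparison
      have hx : k - 1 < (lList w).length := by omega
      have hy : k < (lList w).length := by omega
      rcases lt_or_gt_of_ne (fun h => by
          have := ((lList_nodup w).getElem_inj_iff (hi := hx) (hj := hy)).1 h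
          omega) with hlt | hgt
      · -- l[k-1] < l[k] : peak at k+1
        refine turns_le_two n (k + 1) _ (fun i hi => ?_) (fun i h1 h2 => hB i (by omega) h2)
        rcases Nat.eq_zero_or_pos i with rfl | hip
        · exact hC
        rcases Nat.lt_or_ge i k with hik | hik
        · exact hA i hip hik
        · have hik2 : i = k := by omega
          rw [jumpA_eq w (i := i) hip (by omega),
            jumpA_eq w (i := i + 1) (by omega) (by omega)]
          simp only [Nat.add_sub_cancel]
          subst hik2
          exact hlt
      · -- l[k-1] > l[k] : peak at k
        refine turns_le_two n k _ (fun i hi => ?_) (fun i h1 h2 => ?_)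
        · rcases Nat.eq_zero_or_pos i with rfl | hip
          · exact hC
          · exact hA i hip hi
        · rcases Nat.lt_or_ge k i with hik | hik
          · exact hB i hik h2
          · have hik2 : i = k := by omega
            rw [jumpA_eq w (i := i) (by omega) (by omega),
              jumpA_eq w (i := i + 1) (by omega) (by omega)]
            simp only [Nat.add_sub_cancel]
            subst hik2
            exact hgt

lemma part2 (n : ℕ) (a : ℕ → ℕ) (hJ : IsJumpSeq (2 * n) a)
    (hL : applyJump a (List.replicate n (1 : Fin 2) ++ List.replicate n (0 : Fin 2))
      ∈ LangAB) :
    n + 1 ≤ a 1 ∧ n ≤ maxCost (2 * n) a := by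
  obtain ⟨h0, hN, hmap, hinj, hsurj⟩ := hJ
  rcases Nat.eq_zero_or_pos n with rfl | hpos
  · refine ⟨?_, Nat.zero_le _⟩
    have h1 : a 1 = 1 := by simpa using hN
    omega
  set w := List.replicate n (1 : Fin 2) ++ List.replicate n (0 : Fin 2) with hw
  have hwlen : w.length = 2 * n := by simp [hw]; omega
  have hwget1 : ∀ j, j < n → w.getD j default = 1 := by
    intro j hj
    rw [List.getD_eq_getElem _ _ (by omega)]
    simp only [hw]
    rw [List.getElem_append_left (by simpa using hj)]
    simp
  have hwget0 : ∀ j, n ≤ j → j < 2 * n → w.getD j default = 0 := by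
    intro j hj1 hj2
    rw [List.getD_eq_getElem _ _ (by omega)]
    simp only [hw]
    rw [List.getElem_append_right (by simpa using hj1)]
    simp
  obtain ⟨p, q, hpq⟩ := hL
  have hWlen : (applyJump a w).length = 2 * n := by simp [applyJump, hwlen]
  have hpqlen : p + q = 2 * n := by
    have := congrArg List.length hpq
    rw [hWlen] at this
    simp at this
    omega
  have hgetW : ∀ i, (h : i < 2 * n) →
      (applyJump a w)[i]'(by omega) = w.getD (a (i + 1) - 1) default := by
    intro i h
    simp [applyJump]
  have ha1mem : a 1 ∈ Set.Icc 1 (2 * n) := hmap (Set.mem_Icc.2 ⟨le_refl 1, by omega⟩)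
  rw [Set.mem_Icc] at ha1mem
  obtain ⟨j, hjmem, hja⟩ := hsurj (Set.mem_Icc.2 ⟨by omega, le_refl (2 * n)⟩)
  rw [Set.mem_Icc] at hjmem
  have hz : (applyJump a w)[j - 1]'(by omega) = 0 := by
    rw [hgetW (j - 1) (by omega)]
    have hj1 : j - 1 + 1 = j := by omega
    rw [hj1, hja]
    exact hwget0 _ (by omega) (by omega)
  have hppos : 0 < p := by
    by_contra hp
    have hp0 : p = 0 := by omega
    subst hp0
    simp only [List.replicate_zero, List.nil_append] at hpq
    have h1 : (applyJump a w)[j - 1]'(by omega) = 1 := by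
      simp [hpq]
    rw [hz] at h1
    exact absurd h1 (by decide)
  have h00 : (applyJump a w)[0]'(by omega) = 0 := by
    simp only [hpq]
    rw [List.getElem_append_left (by simpa using hppos)]
    simp
  have ha1 : n + 1 ≤ a 1 := by
    by_contra hle
    push_neg at hle
    have h1 : (applyJump a w)[0]'(by omega) = 1 := by
      rw [hgetW 0 (by omega)]
      simp only [Nat.zero_add]
      exact hwget1 _ (by omega)
    rw [h00] at h1
    exact absurd h1 (by decide)
  refine ⟨ha1, ?_⟩
  have hval : ((a (0 + 1) : ℤ) - (a 0 : ℤ)).natAbs - 1 = a 1 - 1 := by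
    rw [h0]
    simp
  calc n ≤ a 1 - 1 := by omega
    _ = ((a (0 + 1) : ℤ) - (a 0 : ℤ)).natAbs - 1 := hval.symm
    _ ≤ maxCost (2 * n) a :=
        Finset.le_sup (f := fun i => ((a (i + 1) : ℤ) - (a i : ℤ)).natAbs - 1)
          (Finset.mem_range.2 (by omega))

/-- every word over `{a,b}` has an accepting jump sequence into `a*b*`
with at most 2 turning indices (so REV is bounded by 2); but for `w = bⁿaⁿ` every
accepting jump sequence has `a_1 ≥ n+1` and hence maximum-jump cost at least `n`
(so MAX is unbounded). -/
theorem astar_bstar_rev_bounded_max_unbounded :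
    (∀ w : List (Fin 2), ∃ a : ℕ → ℕ, IsJumpSeq w.length a ∧
        applyJump a w ∈ LangAB ∧ turnCount w.length a ≤ 2) ∧
    (∀ n : ℕ, ∀ a : ℕ → ℕ, IsJumpSeq (2 * n) a →
        applyJump a (List.replicate n (1 : Fin 2) ++ List.replicate n (0 : Fin 2))
          ∈ LangAB →
        n + 1 ≤ a 1 ∧ n ≤ maxCost (2 * n) a) :=
  ⟨fun w => ⟨jumpA w, jumpA_isJumpSeq w, jumpA_lang w, jumpA_turns w⟩, part2⟩
end

section
/- For the language L = c* a c* b c* over {a,b,c} and the word w = b c^n a: every jump sequence ā with w_ā ∈ L has absolute-distance cost at least n+1. Hence the ABS semantics of L is unbounded. -/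
open scoped Classical

/-- The language `c* a c* b c*` over `Fin 3` (`a = 0`, `b = 1`, `c = 2`). -/
def LangCACBC : Language (Fin 3) :=
  {w | ∃ p q r : ℕ, w = List.replicate p (2 : Fin 3) ++ [(0 : Fin 3)] ++
      List.replicate q (2 : Fin 3) ++ [(1 : Fin 3)] ++ List.replicate r (2 : Fin 3)}

lemma var_le (f : ℕ → ℤ) (u v : ℕ) (h : u ≤ v) :
    (f v - f u).natAbs ≤ ∑ i ∈ Finset.Ico u v, (f (i+1) - f i).natAbs := by
  induction v, h using Nat.le_induction with
  | base => simp
  | succ v hv ih =>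
    rw [Finset.sum_Ico_succ_top (by omega)]
    have h1 : f (v+1) - f u = (f v - f u) + (f (v+1) - f v) := by ring
    rw [h1]
    exact le_trans (Int.natAbs_add_le _ _) (by omega)

lemma wgetD (n k : ℕ) (hk : k ≤ n + 1) :
    (([(1 : Fin 3)] ++ List.replicate n (2 : Fin 3) ++ [(0 : Fin 3)]).getD k default) =
    if k = 0 then 1 else if k = n + 1 then 0 else 2 := by
  rcases k with _ | j
  · simp
  · have : ([(1 : Fin 3)] ++ List.replicate n (2 : Fin 3) ++ [(0 : Fin 3)]) =
        (1 : Fin 3) :: (List.replicate n (2 : Fin 3) ++ [(0 : Fin 3)]) := by simp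
    rw [this]
    simp only [List.getD_cons_succ]
    rcases lt_or_ge j n with hj | hj
    · rw [List.getD_append _ _ _ _ (by simpa using hj)]
      rw [List.getD_eq_getElem _ _ (by simpa using hj)]
      rw [List.getElem_replicate]
      have h2 : ¬(j + 1 = n + 1) := by omega
      simp [h2]
      omega
    · have hjn : j = n := by omega
      subst hjn
      rw [List.getD_append_right _ _ _ _ (by simp)]
      simp

lemma rhs_assoc (p q r : ℕ) :
    (List.replicate p (2 : Fin 3) ++ [(0 : Fin 3)] ++ List.replicate q (2 : Fin 3) ++
      [(1 : Fin 3)] ++ List.replicate r (2 : Fin 3)) =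
    List.replicate p (2 : Fin 3) ++ ([(0 : Fin 3)] ++ (List.replicate q (2 : Fin 3) ++
      ([(1 : Fin 3)] ++ List.replicate r (2 : Fin 3)))) := by
  simp [List.append_assoc]

lemma rhsgetD_a (p q r : ℕ) :
    ((List.replicate p (2 : Fin 3) ++ [(0 : Fin 3)] ++ List.replicate q (2 : Fin 3) ++
      [(1 : Fin 3)] ++ List.replicate r (2 : Fin 3)).getD p default) = 0 := by
  rw [rhs_assoc, List.getD_append_right _ _ _ _ (by simp)]
  simp

lemma rhsgetD_b (p q r : ℕ) :
    ((List.replicate p (2 : Fin 3) ++ [(0 : Fin 3)] ++ List.replicate q (2 : Fin 3) ++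
      [(1 : Fin 3)] ++ List.replicate r (2 : Fin 3)).getD (p + 1 + q) default) = 1 := by
  rw [rhs_assoc, List.getD_append_right _ _ _ _ (by simp; omega)]
  have h1 : p + 1 + q - (List.replicate p (2 : Fin 3)).length = 1 + q := by simp; omega
  rw [h1, List.getD_append_right _ _ _ _ (by simp)]
  have h2 : 1 + q - ([(0 : Fin 3)]).length = q := by simp
  rw [h2, List.getD_append_right _ _ _ _ (by simp)]
  simp

lemma applyJumpGetD (n : ℕ) (a : ℕ → ℕ) (i : ℕ) (hi : i < n + 2) :
    (applyJump a ([(1 : Fin 3)] ++ List.replicate n (2 : Fin 3) ++ [(0 : Fin 3)])).getD i default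
    = ([(1 : Fin 3)] ++ List.replicate n (2 : Fin 3) ++ [(0 : Fin 3)]).getD (a (i + 1) - 1) default := by
  have hlen : ([(1 : Fin 3)] ++ List.replicate n (2 : Fin 3) ++ [(0 : Fin 3)]).length = n + 2 := by
    simp
  unfold applyJump
  rw [List.getD_eq_getElem _ _ (by simp [hlen]; omega)]
  simp

/-- for `w = b cⁿ a`, every jump sequence accepting into `c* a c* b c*`
has absolute-distance cost at least `n+1`; hence the ABS semantics is unbounded. -/
theorem cacbc_abs_unbounded (n : ℕ) (a : ℕ → ℕ) (hj : IsJumpSeq (n + 2) a)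
    (hacc : applyJump a
        (([(1 : Fin 3)] ++ List.replicate n (2 : Fin 3) ++ [(0 : Fin 3)]))
      ∈ LangCACBC) :
    n + 1 ≤ absCost (n + 2) a := by
  obtain ⟨h0, hend, hbij⟩ := hj
  obtain ⟨p, q, r, heq⟩ := hacc
  have hlenR := congrArg List.length heq
  simp [applyJump] at hlenR
  have hpqr : p + q + r = n := by omega
  have hmem : ∀ i, 1 ≤ i → i ≤ n + 2 → 1 ≤ a i ∧ a i ≤ n + 2 := by
    intro i h1 h2
    exact Set.mem_Icc.mp (hbij.1 (Set.mem_Icc.mpr ⟨h1, h2⟩))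
  have hs : a (p + 1) = n + 2 := by
    have h1 := congrArg (fun l => l.getD p default) heq
    rw [applyJumpGetD n a p (by omega), rhsgetD_a] at h1
    have hm := hmem (p + 1) (by omega) (by omega)
    rw [wgetD n _ (by omega)] at h1
    split_ifs at h1 with h2 h3
    · exact absurd h1 (by decide)
    · omega
    · exact absurd h1 (by decide)
  have ht : a (p + q + 2) = 1 := by
    have h1 := congrArg (fun l => l.getD (p + 1 + q) default) heq
    rw [applyJumpGetD n a (p + 1 + q) (by omega), rhsgetD_b] at h1
    have hm := hmem (p + 1 + q + 1) (by omega) (by omega)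
    rw [wgetD n _ (by omega)] at h1
    have : p + q + 2 = p + 1 + q + 1 := by omega
    rw [this]
    split_ifs at h1 with h2 h3
    · omega
    · exact absurd h1 (by decide)
    · exact absurd h1 (by decide)
  set f : ℕ → ℤ := fun i => (a i : ℤ) with hf
  have hstep : ∀ i ∈ Finset.range (n + 3), 1 ≤ (f (i + 1) - f i).natAbs := by
    intro i hi
    simp only [Finset.mem_range] at hi
    have hne : a (i + 1) ≠ a i := by
      rcases Nat.eq_zero_or_pos i with h | h
      · subst h
        have := hmem 1 le_rfl (by omega)
        simp only [Nat.zero_add]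
        omega
      rcases eq_or_lt_of_le (show i ≤ n + 2 by omega) with h' | h'
      · rw [h', hend]
        have := hmem (n + 2) (by omega) le_rfl
        omega
      · intro hcontra
        have hinj := hbij.2.1 (Set.mem_Icc.mpr ⟨(by omega : 1 ≤ i + 1), (by omega : i + 1 ≤ n + 2)⟩)
          (Set.mem_Icc.mpr ⟨h, (by omega : i ≤ n + 2)⟩) hcontra
        omega
    have : f (i + 1) - f i ≠ 0 := by
      simp only [hf, sub_ne_zero]
      exact_mod_cast hne
    omega
  have e2 : f 0 = 0 := by simp [hf, h0]
  have e3 : f (p + 1) = (n + 2 : ℤ) := by simp [hf, hs]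
  have e4 : f (p + q + 2) = 1 := by simp [hf, ht]
  have e5 : f (n + 3) = (n + 3 : ℤ) := by
    have : a (n + 3) = n + 3 := hend
    simp [hf, this]
  have hsum : (3 * n + 5 : ℕ) ≤ ∑ i ∈ Finset.range (n + 3), (f (i + 1) - f i).natAbs := by
    rw [Finset.range_eq_Ico]
    rw [← Finset.sum_Ico_consecutive _ (show 0 ≤ p + 1 by omega) (show p + 1 ≤ n + 3 by omega)]
    rw [← Finset.sum_Ico_consecutive _ (show p + 1 ≤ p + q + 2 by omega)
      (show p + q + 2 ≤ n + 3 by omega)]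
    have v1 := var_le f 0 (p + 1) (by omega)
    have v2 := var_le f (p + 1) (p + q + 2) (by omega)
    have v3 := var_le f (p + q + 2) (n + 3) (by omega)
    rw [e2, e3] at v1
    rw [e3, e4] at v2
    rw [e4, e5] at v3
    have c1 : ((n + 2 : ℤ) - 0).natAbs = n + 2 := by omega
    have c2 : ((1 : ℤ) - (n + 2)).natAbs = n + 1 := by omega
    have c3 : ((n + 3 : ℤ) - 1).natAbs = n + 2 := by omega
    rw [c1] at v1; rw [c2] at v2; rw [c3] at v3
    omega
  have hsplit : ∑ i ∈ Finset.range (n + 3), (f (i + 1) - f i).natAbs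
      = absCost (n + 2) a + (n + 3) := by
    have : ∀ i ∈ Finset.range (n + 3), (f (i + 1) - f i).natAbs
        = ((f (i + 1) - f i).natAbs - 1) + 1 := fun i hi => (Nat.sub_add_cancel (hstep i hi)).symm
    rw [Finset.sum_congr rfl this, Finset.sum_add_distrib]
    simp [absCost, hf]
  omega
end
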